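/- Let X(Γ) be the universal cover of the Salvetti complex of a right-angled Artin group G(Γ), and let 𝒫(Γ) be its extension complex. Fix non-adjacent vertices v, u ∈ 𝒫(Γ) and a standard geodesic l_u with Δ(l_u) = u. Then for any standard geodesic l with Δ(l) = v, the nearest-point projection π_{l_u}(l) is a single vertex of l_u, and this vertex is independent of the choice of l within its parallelism class. -/

import Mathlib

/-! A model of the right-angled Artin group `G(Γ)` and of the vertex set of the
universal cover `X(Γ)` of its Salvetti complex: the group is the presented group
with commutator relations from `Γ`, and the `0`-skeleton of `X(Γ)` is identified
with `G(Γ)`, with the `1`-skeleton given by the Cayley graph. -/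

/-- The commutator relators of the right-angled Artin group on `Γ`. -/
def raagRels {ι : Type} (Γ : SimpleGraph ι) : Set (FreeGroup ι) :=
  {r | ∃ i j : ι, Γ.Adj i j ∧
    r = FreeGroup.of i * FreeGroup.of j * (FreeGroup.of i)⁻¹ * (FreeGroup.of j)⁻¹}

/-- The right-angled Artin group `G(Γ)`. -/
abbrev Raag {ι : Type} (Γ : SimpleGraph ι) := PresentedGroup (raagRels Γ)

/-- The standard generator of `G(Γ)` corresponding to a vertex of `Γ`. -/
def rgen {ι : Type} (Γ : SimpleGraph ι) (i : ι) : Raag Γ := PresentedGroup.of i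

/-- The Cayley graph of `G(Γ)` w.r.t. the standard generators: the 1-skeleton of
`X(Γ)`, with vertex set identified with `G(Γ)`. -/
def cayley {ι : Type} (Γ : SimpleGraph ι) : SimpleGraph (Raag Γ) where
  Adj g h := g ≠ h ∧ ∃ i : ι, h = g * rgen Γ i ∨ g = h * rgen Γ i
  symm := by constructor; rintro g h ⟨hne, i, hi⟩; exact ⟨hne.symm, i, hi.symm⟩
  loopless := by constructor; rintro g ⟨hne, _⟩; exact hne rfl

/-- The distance from a vertex to a set of vertices (in the graph metric, i.e.
the word metric). -/
noncomputable def setDistN {V : Type} (G : SimpleGraph V) (x : V) (B : Set V) : ℕ :=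
  sInf ((fun b => G.dist x b) '' B)

/-- Two nonempty subsets are parallel: the distance to one is constant on the
other, and vice versa (with a common constant). -/
def ParSets {V : Type} (G : SimpleGraph V) (A B : Set V) : Prop :=
  A.Nonempty ∧ B.Nonempty ∧ ∃ c : ℕ,
    (∀ a ∈ A, setDistN G a B = c) ∧ (∀ b ∈ B, setDistN G b A = c)

/-- `m` is the unique nearest point of `A` to `z` (the nearest-point projection
of `z` onto `A`). -/
def NearestPt {V : Type} (G : SimpleGraph V) (A : Set V) (z m : V) : Prop :=
  m ∈ A ∧ ∀ w ∈ A, w ≠ m → G.dist z m < G.dist z w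

/-- The (vertex set of the) standard geodesic through `g` in the direction of the
generator `i`. -/
def stdGeod {ι : Type} (Γ : SimpleGraph ι) (g : Raag Γ) (i : ι) : Set (Raag Γ) :=
  {h | ∃ n : ℤ, h = g * rgen Γ i ^ n}

/-- `A` is (the vertex set of) a standard geodesic of `X(Γ)`. -/
def IsStdGeod {ι : Type} (Γ : SimpleGraph ι) (A : Set (Raag Γ)) : Prop :=
  ∃ (g : Raag Γ) (i : ι), A = stdGeod Γ g i

/-- The standard geodesics `A` and `B` span a standard 2-flat. -/
def Span2 {ι : Type} (Γ : SimpleGraph ι) (A B : Set (Raag Γ)) : Prop :=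
  ∃ (g : Raag Γ) (i j : ι), Γ.Adj i j ∧ A = stdGeod Γ g i ∧ B = stdGeod Γ g j

/-- The vertices `Δ(A)`, `Δ(B)` of the extension complex `𝒫(Γ)` determined by
the standard geodesics `A`, `B` are adjacent: some parallel representatives span
a standard 2-flat. -/
def ClassAdj {ι : Type} (Γ : SimpleGraph ι) (A B : Set (Raag Γ)) : Prop :=
  ∃ A' B' : Set (Raag Γ), IsStdGeod Γ A' ∧ IsStdGeod Γ B' ∧
    ParSets (cayley Γ) A A' ∧ ParSets (cayley Γ) B B' ∧
    (Span2 Γ A' B' ∨ Span2 Γ B' A')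

/-- `F` is (the 0-skeleton of) a standard flat of `X(Γ)`: a coset of the standard
abelian subgroup generated by a finite clique of `Γ`. -/
def IsStdFlat {ι : Type} (Γ : SimpleGraph ι) (F : Set (Raag Γ)) : Prop :=
  ∃ (g : Raag Γ) (S : Set ι), S.Finite ∧ S.Pairwise Γ.Adj ∧
    F = (fun x => g * x) '' (Subgroup.closure (rgen Γ '' S) : Set (Raag Γ))

/-- The `Δ(l)`-level of height `x`: the set of vertices whose nearest-point
projection onto the standard geodesic `l` is `x`. -/
def levelSet {ι : Type} (Γ : SimpleGraph ι) (l : Set (Raag Γ)) (x : Raag Γ) :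
    Set (Raag Γ) :=
  {z | NearestPt (cayley Γ) l z x}


section Stmt11Dev
open Classical
attribute [local instance] Classical.propDecidable

namespace Stmt11

variable {ι : Type} (Γ : SimpleGraph ι)

/-- letters -/
abbrev Ltr (ι : Type) := ι × Bool

def linv (x : Ltr ι) : Ltr ι := (x.1, !x.2)

@[simp] lemma linv_linv (x : Ltr ι) : linv (linv x) = x := by
  cases x with | mk a b => cases b <;> rfl

@[simp] lemma linv_fst (x : Ltr ι) : (linv x).1 = x.1 := rfl

lemma linv_eq_iff {x y : Ltr ι} : linv x = y ↔ x = linv y := by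
  constructor <;> rintro rfl <;> simp

noncomputable def gv (x : Ltr ι) : Raag Γ :=
  if x.2 then rgen Γ x.1 else (rgen Γ x.1)⁻¹

@[simp] lemma gv_linv (x : Ltr ι) : gv Γ (linv x) = (gv Γ x)⁻¹ := by
  cases x with | mk a b => cases b <;> simp [gv, linv]

noncomputable def ev (L : List (Ltr ι)) : Raag Γ := (L.map (gv Γ)).prod

@[simp] lemma ev_nil : ev Γ ([] : List (Ltr ι)) = 1 := rfl

@[simp] lemma ev_cons (x : Ltr ι) (L : List (Ltr ι)) :
    ev Γ (x :: L) = gv Γ x * ev Γ L := by simp [ev]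

@[simp] lemma ev_append (L M : List (Ltr ι)) :
    ev Γ (L ++ M) = ev Γ L * ev Γ M := by simp [ev]

@[simp] lemma ev_singleton (x : Ltr ι) : ev Γ [x] = gv Γ x := by simp [ev]

lemma rgen_comm {a b : ι} (h : Γ.Adj a b) :
    Commute (rgen Γ a) (rgen Γ b) := by
  have hr : (FreeGroup.of a * FreeGroup.of b * (FreeGroup.of a)⁻¹ * (FreeGroup.of b)⁻¹ :
      FreeGroup ι) ∈ raagRels Γ := ⟨a, b, h, rfl⟩
  have h1 : (PresentedGroup.mk (raagRels Γ))
      (FreeGroup.of a * FreeGroup.of b * (FreeGroup.of a)⁻¹ * (FreeGroup.of b)⁻¹) = 1 := by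
    apply (QuotientGroup.eq_one_iff _).mpr
    exact Subgroup.subset_normalClosure hr
  have h2 : rgen Γ a * rgen Γ b * (rgen Γ a)⁻¹ * (rgen Γ b)⁻¹ = 1 := by
    simpa [rgen, PresentedGroup.of] using h1
  have h3 : rgen Γ a * rgen Γ b * (rgen Γ a)⁻¹ = rgen Γ b := by
    have := mul_eq_one_iff_eq_inv.mp h2
    simpa using this
  exact mul_inv_eq_iff_eq_mul.mp h3

lemma gv_comm {x y : Ltr ι} (h : Γ.Adj x.1 y.1) :
    Commute (gv Γ x) (gv Γ y) := by
  have := rgen_comm Γ h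
  cases hx : x.2 <;> cases hy : y.2 <;> simp [gv, hx, hy] <;>
    first
      | exact this
      | exact this.inv_left
      | exact this.inv_right
      | exact this.inv_left.inv_right



lemma ne_linv_of_adj {x z : Ltr ι} (h : Γ.Adj x.1 z.1) : z ≠ linv x := by
  intro hz; rw [hz] at h; simp at h
lemma ne_linv_of_adj' {x z : Ltr ι} (h : Γ.Adj x.1 z.1) : x ≠ linv z := by
  intro hz; rw [hz] at h; simp at h

/-- scan for a cancelling partner of `x`. -/
noncomputable def mcan (x : Ltr ι) : List (Ltr ι) → Option (List (Ltr ι))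
  | [] => none
  | y :: L =>
    if y = linv x then some L
    else if Γ.Adj x.1 y.1 then (mcan x L).map (y :: ·) else none

noncomputable def mpush (x : Ltr ι) (L : List (Ltr ι)) : List (Ltr ι) :=
  (mcan Γ x L).getD (x :: L)

lemma mcan_nil (x : Ltr ι) : mcan Γ x [] = none := rfl

lemma mcan_cons_cancel {x y : Ltr ι} (L : List (Ltr ι)) (h : y = linv x) :
    mcan Γ x (y :: L) = some L := by simp [mcan, h]

lemma mcan_cons_com {x y : Ltr ι} (L : List (Ltr ι)) (h : Γ.Adj x.1 y.1) :
    mcan Γ x (y :: L) = (mcan Γ x L).map (y :: ·) := by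
  have : y ≠ linv x := ne_linv_of_adj Γ h
  simp [mcan, this, h]

lemma mcan_cons_block {x y : Ltr ι} (L : List (Ltr ι)) (h1 : y ≠ linv x)
    (h2 : ¬ Γ.Adj x.1 y.1) : mcan Γ x (y :: L) = none := by
  simp [mcan, h1, h2]

/-- K1a : structure of a successful scan. -/
lemma mcan_some {x : Ltr ι} {L L' : List (Ltr ι)} (h : mcan Γ x L = some L') :
    ∃ P T, (∀ z ∈ P, Γ.Adj x.1 z.1) ∧ L = P ++ linv x :: T ∧ L' = P ++ T := by
  induction L generalizing L' with
  | nil => simp [mcan] at h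
  | cons y L ih =>
    by_cases hy : y = linv x
    · rw [mcan_cons_cancel Γ L hy] at h
      exact ⟨[], L, by simp, by simp [hy], by simpa using h.symm⟩
    · by_cases hadj : Γ.Adj x.1 y.1
      · rw [mcan_cons_com Γ L hadj] at h
        rcases Option.map_eq_some_iff.mp h with ⟨M, hM, rfl⟩
        rcases ih hM with ⟨P, T, hcom, rfl, rfl⟩
        refine ⟨y :: P, T, ?_, rfl, rfl⟩
        intro z hz
        rcases List.mem_cons.mp hz with rfl | hz'
        · exact hadj
        · exact hcom z hz'
      · rw [mcan_cons_block Γ L hy hadj] at h; exact absurd h (by simp)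

/-- K1b : a commuting prefix guarantees cancellation. -/
lemma mcan_of_split {x : Ltr ι} (P T : List (Ltr ι)) (hcom : ∀ z ∈ P, Γ.Adj x.1 z.1) :
    mcan Γ x (P ++ linv x :: T) = some (P ++ T) := by
  induction P with
  | nil => simpa using mcan_cons_cancel Γ T rfl
  | cons p P ih =>
    have hp : Γ.Adj x.1 p.1 := hcom p (by simp)
    rw [List.cons_append, mcan_cons_com Γ _ hp, ih (fun z hz => hcom z (by simp [hz]))]
    rfl

lemma mcan_append_some {x : Ltr ι} {A A' : List (Ltr ι)} (M : List (Ltr ι))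
    (h : mcan Γ x A = some A') : mcan Γ x (A ++ M) = some (A' ++ M) := by
  rcases mcan_some Γ h with ⟨P, T, hcom, rfl, rfl⟩
  rw [List.append_assoc, List.cons_append, mcan_of_split Γ P (T ++ M) hcom]
  simp

lemma mcan_append_com {x : Ltr ι} (A M : List (Ltr ι)) (hcom : ∀ z ∈ A, Γ.Adj x.1 z.1) :
    mcan Γ x (A ++ M) = (mcan Γ x M).map (A ++ ·) := by
  induction A with
  | nil => simp
  | cons a A ih =>
    have ha : Γ.Adj x.1 a.1 := hcom a (by simp)
    rw [List.cons_append, mcan_cons_com Γ _ ha, ih (fun z hz => hcom z (by simp [hz]))]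
    cases mcan Γ x M <;> simp

lemma mcan_none_cases {x : Ltr ι} {A : List (Ltr ι)} (h : mcan Γ x A = none) :
    (∀ z ∈ A, Γ.Adj x.1 z.1) ∨
    ∃ A₁ z A₂, A = A₁ ++ z :: A₂ ∧ (∀ w ∈ A₁, Γ.Adj x.1 w.1) ∧ ¬ Γ.Adj x.1 z.1 ∧ z ≠ linv x := by
  induction A with
  | nil => exact Or.inl (by simp)
  | cons a A ih =>
    by_cases ha : a = linv x
    · rw [mcan_cons_cancel Γ A ha] at h; exact absurd h (by simp)
    · by_cases hadj : Γ.Adj x.1 a.1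
      · rw [mcan_cons_com Γ A hadj] at h
        have : mcan Γ x A = none := by
          cases hA : mcan Γ x A; rfl; rw [hA] at h; simp at h
        rcases ih this with h1 | ⟨A₁, z, A₂, rfl, hw, hz1, hz2⟩
        · refine Or.inl ?_
          intro z hz
          rcases List.mem_cons.mp hz with rfl | hz'
          · exact hadj
          · exact h1 z hz'
        · refine Or.inr ⟨a :: A₁, z, A₂, rfl, ?_, hz1, hz2⟩
          intro w hw'
          rcases List.mem_cons.mp hw' with rfl | hw2
          · exact hadj
          · exact hw w hw2
      · exact Or.inr ⟨[], a, A, rfl, by simp, hadj, ha⟩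

lemma mcan_append_block {x z : Ltr ι} (A₁ : List (Ltr ι)) (R : List (Ltr ι))
    (hcom : ∀ w ∈ A₁, Γ.Adj x.1 w.1) (hz1 : ¬ Γ.Adj x.1 z.1) (hz2 : z ≠ linv x) :
    mcan Γ x (A₁ ++ z :: R) = none := by
  rw [mcan_append_com Γ A₁ _ hcom, mcan_cons_block Γ R hz2 hz1]; rfl

/-- a cancelling pair -/
def HasPair (L : List (Ltr ι)) : Prop :=
  ∃ (A B C : List (Ltr ι)) (x : Ltr ι),
    L = A ++ x :: (B ++ linv x :: C) ∧ ∀ z ∈ B, Γ.Adj x.1 z.1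

lemma haspair_cons {L : List (Ltr ι)} (y : Ltr ι) (h : HasPair Γ L) : HasPair Γ (y :: L) := by
  rcases h with ⟨A, B, C, x, rfl, hB⟩
  exact ⟨y :: A, B, C, x, rfl, hB⟩

lemma haspair_head {L : List (Ltr ι)} {x : Ltr ι} (B C : List (Ltr ι))
    (hL : L = B ++ linv x :: C) (hB : ∀ z ∈ B, Γ.Adj x.1 z.1) : HasPair Γ (x :: L) :=
  ⟨[], B, C, x, by simp [hL], hB⟩

lemma haspair_cons_elim {L : List (Ltr ι)} {y : Ltr ι} (h : HasPair Γ (y :: L)) :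
    (∃ B C, L = B ++ linv y :: C ∧ ∀ z ∈ B, Γ.Adj y.1 z.1) ∨ HasPair Γ L := by
  rcases h with ⟨A, B, C, x, hL, hB⟩
  cases A with
  | nil =>
    simp at hL
    obtain ⟨rfl, rfl⟩ := hL
    exact Or.inl ⟨B, C, rfl, hB⟩
  | cons a A =>
    simp at hL
    exact Or.inr (by rw [hL.2]; exact ⟨A, B, C, x, rfl, hB⟩)

/-- inserting a letter that commutes with everything before the insertion point
preserves cancelling pairs. -/
lemma haspair_insert (w : Ltr ι) (P T : List (Ltr ι))
    (hcom : ∀ y ∈ P, Γ.Adj y.1 w.1) (h : HasPair Γ (P ++ T)) :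
    HasPair Γ (P ++ w :: T) := by
  induction P with
  | nil => exact haspair_cons Γ w (by simpa using h)
  | cons p P ih =>
    rw [List.cons_append] at h
    rcases haspair_cons_elim Γ h with ⟨B, C, hBC, hB⟩ | htail
    · -- head pair : P ++ T = B ++ linv p :: C
      rcases List.append_eq_append_iff.mp hBC with ⟨a', hB', hT⟩ | ⟨c', hP, hC⟩
      · -- B = P ++ a', T = a' ++ linv p :: C
        subst hB' hT
        refine ⟨[], P ++ w :: a', C, p, by simp, ?_⟩
        intro z hz
        rcases List.mem_append.mp hz with hz1 | hz2
        · exact hB z (List.mem_append.mpr (Or.inl hz1))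
        · rcases List.mem_cons.mp hz2 with rfl | hz3
          · exact hcom p (by simp)
          · exact hB z (List.mem_append.mpr (Or.inr hz3))
      · cases c' with
        | nil =>
          simp at hP hC
          subst hP
          refine ⟨[], P ++ [w], C, p, by simp [← hC], ?_⟩
          intro z hz
          rcases List.mem_append.mp hz with hz1 | hz2
          · exact hB z hz1
          · rcases List.mem_singleton.mp hz2 with rfl
            exact hcom p (by simp)
        | cons e c'' =>
          obtain ⟨rfl, rfl⟩ : e = linv p ∧ C = c'' ++ T := by
            constructor
            · exact (List.cons.injEq _ _ _ _ ▸ hC).1.symm ▸ rfl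
            · exact (List.cons_eq_cons.mp hC).2
          subst hP
          exact ⟨[], B, c'' ++ w :: T, p, by simp, hB⟩
    · exact haspair_cons Γ p (ih (fun y hy => hcom y (by simp [hy])) htail)


lemma red_insert {x : Ltr ι} {P T : List (Ltr ι)} (hcom : ∀ z ∈ P, Γ.Adj x.1 z.1)
    (h : ¬ HasPair Γ (P ++ linv x :: T)) : ¬ HasPair Γ (P ++ T) := by
  intro hp
  exact h (haspair_insert Γ (linv x) P T (fun y hy => by simpa using (hcom y hy).symm) hp)

lemma mpush_of_some {x : Ltr ι} {L L' : List (Ltr ι)} (h : mcan Γ x L = some L') :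
    mpush Γ x L = L' := by simp [mpush, h]

lemma mpush_of_none {x : Ltr ι} {L : List (Ltr ι)} (h : mcan Γ x L = none) :
    mpush Γ x L = x :: L := by simp [mpush, h]

lemma red_push {x : Ltr ι} {L : List (Ltr ι)} (h : ¬ HasPair Γ L) :
    ¬ HasPair Γ (mpush Γ x L) := by
  cases hc : mcan Γ x L with
  | none =>
    rw [mpush_of_none Γ hc]
    intro hp
    rcases haspair_cons_elim Γ hp with ⟨B, C, hBC, hB⟩ | htail
    · rw [hBC, mcan_of_split Γ B C hB] at hc; exact absurd hc (by simp)
    · exact h htail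
  | some L' =>
    rcases mcan_some Γ hc with ⟨P, T, hcom, hL, hL'⟩
    rw [mpush_of_some Γ hc, hL']
    rw [hL] at h
    exact red_insert Γ hcom h

/-- commutation swaps -/
def SwapStep (L₁ L₂ : List (Ltr ι)) : Prop :=
  ∃ (A : List (Ltr ι)) (x y : Ltr ι) (B : List (Ltr ι)),
    Γ.Adj x.1 y.1 ∧ L₁ = A ++ x :: y :: B ∧ L₂ = A ++ y :: x :: B

abbrev wrel : List (Ltr ι) → List (Ltr ι) → Prop := Relation.EqvGen (SwapStep Γ)

lemma wrel_cons {M N : List (Ltr ι)} (p : Ltr ι) (h : wrel Γ M N) :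
    wrel Γ (p :: M) (p :: N) := by
  induction h with
  | rel a b hab =>
    rcases hab with ⟨A, x, y, B, hadj, rfl, rfl⟩
    exact Relation.EqvGen.rel _ _ ⟨p :: A, x, y, B, hadj, rfl, rfl⟩
  | refl a => exact Relation.EqvGen.refl _
  | symm a b _ ih => exact ih.symm _ _
  | trans a b c _ _ ih1 ih2 => exact ih1.trans _ _ _ ih2

lemma wrel_append {M N : List (Ltr ι)} (A : List (Ltr ι)) (h : wrel Γ M N) :
    wrel Γ (A ++ M) (A ++ N) := by
  induction A with
  | nil => simpa using h
  | cons a A ih => exact wrel_cons Γ a ih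

lemma wrel_bubble {w : Ltr ι} (P T : List (Ltr ι)) (hcom : ∀ z ∈ P, Γ.Adj w.1 z.1) :
    wrel Γ (w :: (P ++ T)) (P ++ w :: T) := by
  induction P with
  | nil => exact Relation.EqvGen.refl _
  | cons p P ih =>
    have h1 : SwapStep Γ (w :: (p :: P ++ T)) (p :: w :: (P ++ T)) :=
      ⟨[], w, p, P ++ T, hcom p (by simp), rfl, rfl⟩
    exact (Relation.EqvGen.rel _ _ h1).trans _ _ _
      (wrel_cons Γ p (ih (fun z hz => hcom z (by simp [hz]))))

/-- the push by `x` followed by the push by `linv x` is the identity, up to swaps. -/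
lemma push_push_linv {x : Ltr ι} {L : List (Ltr ι)} (h : ¬ HasPair Γ L) :
    wrel Γ (mpush Γ (linv x) (mpush Γ x L)) L := by
  cases hc : mcan Γ x L with
  | none =>
    rw [mpush_of_none Γ hc]
    have : mcan Γ (linv x) (x :: L) = some L := mcan_cons_cancel Γ L (by simp)
    rw [mpush_of_some Γ this]
    exact Relation.EqvGen.refl _
  | some L' =>
    rcases mcan_some Γ hc with ⟨P, T, hcom, hL, hL'⟩
    rw [mpush_of_some Γ hc, hL']
    have hnone : mcan Γ (linv x) (P ++ T) = none := by
      cases h2 : mcan Γ (linv x) (P ++ T) with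
      | none => rfl
      | some M =>
        exfalso
        rcases mcan_some Γ h2 with ⟨Q, S, hQ, hsplit, _⟩
        rw [linv_linv] at hsplit
        rcases List.append_eq_append_iff.mp hsplit with ⟨a', hQ', hT⟩ | ⟨c', hP, hxS⟩
        · refine h ?_
          rw [hL, hT]
          refine ⟨P, a', S, linv x, by simp, ?_⟩
          intro z hz
          simpa using hQ z (by rw [hQ']; exact List.mem_append.mpr (Or.inr hz))
        · cases c' with
          | nil =>
            simp at hP hxS
            refine h ?_
            rw [hL, hP, ← hxS]
            exact ⟨Q, [], S, linv x, by simp, by simp⟩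
          | cons e c'' =>
            have he : e = x := (List.cons_eq_cons.mp hxS.symm).1
            have h4 := hcom e (by rw [hP]; simp)
            rw [he] at h4
            simp at h4
    rw [mpush_of_none Γ hnone, hL]
    exact wrel_bubble Γ P T (fun z hz => by simpa using hcom z hz)

/-- pushes along adjacent generators commute (exactly, in the mixed cases;
up to a swap in the generic case). -/
lemma push_comm {x y : Ltr ι} (hadj : Γ.Adj x.1 y.1) (L : List (Ltr ι)) :
    wrel Γ (mpush Γ x (mpush Γ y L)) (mpush Γ y (mpush Γ x L)) := by
  have hyx : Γ.Adj y.1 x.1 := hadj.symm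
  have hne : x.1 ≠ y.1 := Γ.ne_of_adj hadj
  -- auxiliary : the mixed case gives exact equality
  have aux : ∀ (x y : Ltr ι), Γ.Adj x.1 y.1 →
      ∀ L Ly, mcan Γ y L = some Ly → mcan Γ x L = none →
      mpush Γ x (mpush Γ y L) = mpush Γ y (mpush Γ x L) := by
    intro x y hadj L Ly hy hx
    rcases mcan_some Γ hy with ⟨P, T, hcom, hL, hLy⟩
    have h1 : mcan Γ x (P ++ T) = none := by
      cases h2 : mcan Γ x (P ++ T) with
      | none => rfl
      | some M =>
        exfalso
        rcases mcan_some Γ h2 with ⟨Q, S, hQ, hsplit, -⟩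
        rcases List.append_eq_append_iff.mp hsplit with ⟨a', hQ', hT⟩ | ⟨c', hP, hxS⟩
        · have : mcan Γ x L = some (P ++ linv y :: a' ++ S) := by
            rw [hL, hT]
            have := mcan_of_split Γ (P ++ linv y :: a') S (by
              intro z hz
              rcases List.mem_append.mp hz with hz1 | hz2
              · exact hQ z (by rw [hQ']; exact List.mem_append.mpr (Or.inl hz1))
              · rcases List.mem_cons.mp hz2 with rfl | hz3
                · simpa using hadj
                · exact hQ z (by rw [hQ']; exact List.mem_append.mpr (Or.inr hz3)))
            simpa using this
          rw [this] at hx; exact absurd hx (by simp)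
        · cases c' with
          | nil =>
            simp at hP hxS
            have : mcan Γ x L = some (Q ++ linv y :: S) := by
              rw [hL, hP, ← hxS]
              have := mcan_of_split Γ (Q ++ [linv y]) S (by
                intro z hz
                rcases List.mem_append.mp hz with hz1 | hz2
                · exact hQ z hz1
                · rcases List.mem_singleton.mp hz2 with rfl
                  simpa using hadj)
              simpa using this
            rw [this] at hx; exact absurd hx (by simp)
          | cons e c'' =>
            obtain ⟨rfl, rfl⟩ := List.cons_eq_cons.mp hxS.symm
            have : mcan Γ x L = some (Q ++ c'' ++ linv y :: T) := by
              rw [hL, hP]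
              have := mcan_of_split Γ Q (c'' ++ linv y :: T) hQ
              simpa using this
            rw [this] at hx; exact absurd hx (by simp)
    rw [mpush_of_some Γ hy, hLy, mpush_of_none Γ h1, mpush_of_none Γ hx]
    have h3 : mcan Γ y (x :: L) = some (x :: (P ++ T)) := by
      rw [mcan_cons_com Γ L hadj.symm, hy, hLy]; rfl
    rw [mpush_of_some Γ h3]
  cases hx : mcan Γ x L with
  | none =>
    cases hy : mcan Γ y L with
    | none =>
      rw [mpush_of_none Γ hy, mpush_of_none Γ hx]
      have h1 : mcan Γ x (y :: L) = none := by
        rw [mcan_cons_com Γ L hadj, hx]; rfl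
      have h2 : mcan Γ y (x :: L) = none := by
        rw [mcan_cons_com Γ L hyx, hy]; rfl
      rw [mpush_of_none Γ h1, mpush_of_none Γ h2]
      exact Relation.EqvGen.rel _ _ ⟨[], x, y, L, hadj, rfl, rfl⟩
    | some Ly => rw [aux x y hadj L Ly hy hx]; exact Relation.EqvGen.refl _
  | some Lx =>
    cases hy : mcan Γ y L with
    | none => rw [aux y x hyx L Lx hx hy]; exact Relation.EqvGen.refl _
    | some Ly =>
      -- both cancel
      rcases mcan_some Γ hx with ⟨P, T, hcomx, hLP, hLx⟩
      rcases mcan_some Γ hy with ⟨Q, S, hcomy, hLQ, hLy⟩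
      have key : ∀ (x y : Ltr ι), Γ.Adj x.1 y.1 →
          ∀ (P M S : List (Ltr ι)), (∀ z ∈ P, Γ.Adj x.1 z.1) →
          (∀ z ∈ P ++ linv x :: M, Γ.Adj y.1 z.1) →
          wrel Γ (mpush Γ x (mpush Γ y (P ++ linv x :: (M ++ linv y :: S))))
            (mpush Γ y (mpush Γ x (P ++ linv x :: (M ++ linv y :: S)))) := by
        intro x y hadj P M S hcx hcy
        have hy' : mcan Γ y (P ++ linv x :: (M ++ linv y :: S))
            = some (P ++ linv x :: (M ++ S)) := by
          have := mcan_of_split Γ (P ++ linv x :: M) S hcy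
          simpa using this
        have hx' : mcan Γ x (P ++ linv x :: (M ++ linv y :: S))
            = some (P ++ (M ++ linv y :: S)) := mcan_of_split Γ P _ hcx
        rw [mpush_of_some Γ hy', mpush_of_some Γ hx']
        have hx'' : mcan Γ x (P ++ linv x :: (M ++ S)) = some (P ++ (M ++ S)) :=
          mcan_of_split Γ P _ hcx
        have hy'' : mcan Γ y (P ++ (M ++ linv y :: S)) = some (P ++ (M ++ S)) := by
          have := mcan_of_split Γ (P ++ M) S (by
            intro z hz
            rcases List.mem_append.mp hz with hz1 | hz2
            · exact hcy z (List.mem_append.mpr (Or.inl hz1))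
            · exact hcy z (by simp [hz2]))
          simpa using this
        rw [mpush_of_some Γ hx'', mpush_of_some Γ hy'']
        exact Relation.EqvGen.refl _
      rcases List.append_eq_append_iff.mp (hLP.symm.trans hLQ) with ⟨a', hQ', hT⟩ | ⟨c', hP', hS⟩
      · cases a' with
        | nil =>
          exfalso
          simp at hT
          have : (linv x).1 = (linv y).1 := by rw [hT.1]
          simp at this; exact hne this
        | cons e M =>
          obtain ⟨rfl, rfl⟩ := List.cons_eq_cons.mp hT
          subst hQ' hLP
          exact key x y hadj P M S hcomx hcomy
      · cases c' with
        | nil =>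
          exfalso
          simp at hS
          have : (linv x).1 = (linv y).1 := by rw [hS.1]
          simp at this; exact hne this
        | cons e M =>
          obtain ⟨rfl, rfl⟩ := List.cons_eq_cons.mp hS
          subst hP' hLQ
          exact Relation.EqvGen.symm _ _ (key y x hyx Q M T hcomy hcomx)

/-- pushing respects the swap relation. -/
lemma swap_push {x : Ltr ι} {L₁ L₂ : List (Ltr ι)} (h : SwapStep Γ L₁ L₂) :
    wrel Γ (mpush Γ x L₁) (mpush Γ x L₂) := by
  rcases h with ⟨A, u, v, B, hadj, rfl, rfl⟩
  have cons_case : mcan Γ x (A ++ u :: v :: B) = none →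
      mcan Γ x (A ++ v :: u :: B) = none →
      wrel Γ (mpush Γ x (A ++ u :: v :: B)) (mpush Γ x (A ++ v :: u :: B)) := by
    intro h1 h2
    rw [mpush_of_none Γ h1, mpush_of_none Γ h2]
    exact Relation.EqvGen.rel _ _ ⟨x :: A, u, v, B, hadj, rfl, rfl⟩
  cases hA : mcan Γ x A with
  | some A' =>
    rw [mpush_of_some Γ (mcan_append_some Γ _ hA), mpush_of_some Γ (mcan_append_some Γ _ hA)]
    exact Relation.EqvGen.rel _ _ ⟨A', u, v, B, hadj, rfl, rfl⟩
  | none =>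
    rcases mcan_none_cases Γ hA with hcomA | ⟨A₁, z, A₂, rfl, hA₁, hz1, hz2⟩
    · -- A commutes with x ; analyse the two-letter core
      by_cases hu : u = linv x
      · subst hu
        have hxv : Γ.Adj x.1 v.1 := by simpa using hadj
        have h1 : mcan Γ x (linv x :: v :: B) = some (v :: B) := mcan_cons_cancel Γ _ rfl
        have h2 : mcan Γ x (v :: linv x :: B) = some (v :: B) := by
          rw [mcan_cons_com Γ _ hxv, mcan_cons_cancel Γ _ rfl]; rfl
        rw [mpush_of_some Γ (by rw [mcan_append_com Γ A _ hcomA, h1]; rfl),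
          mpush_of_some Γ (by rw [mcan_append_com Γ A _ hcomA, h2]; rfl)]
        exact Relation.EqvGen.refl _
      · by_cases hv : v = linv x
        · subst hv
          have hxu : Γ.Adj x.1 u.1 := by simpa using hadj.symm
          have h1 : mcan Γ x (u :: linv x :: B) = some (u :: B) := by
            rw [mcan_cons_com Γ _ hxu, mcan_cons_cancel Γ _ rfl]; rfl
          have h2 : mcan Γ x (linv x :: u :: B) = some (u :: B) := mcan_cons_cancel Γ _ rfl
          rw [mpush_of_some Γ (by rw [mcan_append_com Γ A _ hcomA, h1]; rfl),
            mpush_of_some Γ (by rw [mcan_append_com Γ A _ hcomA, h2]; rfl)]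
          exact Relation.EqvGen.refl _
        · by_cases hcu : Γ.Adj x.1 u.1
          · by_cases hcv : Γ.Adj x.1 v.1
            · cases hB : mcan Γ x B with
              | some B' =>
                have h1 : mcan Γ x (u :: v :: B) = some (u :: v :: B') := by
                  rw [mcan_cons_com Γ _ hcu, mcan_cons_com Γ _ hcv, hB]; rfl
                have h2 : mcan Γ x (v :: u :: B) = some (v :: u :: B') := by
                  rw [mcan_cons_com Γ _ hcv, mcan_cons_com Γ _ hcu, hB]; rfl
                rw [mpush_of_some Γ (by rw [mcan_append_com Γ A _ hcomA, h1]; rfl),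
                  mpush_of_some Γ (by rw [mcan_append_com Γ A _ hcomA, h2]; rfl)]
                exact wrel_append Γ A (Relation.EqvGen.rel _ _ ⟨[], u, v, B', hadj, rfl, rfl⟩)
              | none =>
                refine cons_case ?_ ?_ <;>
                  rw [mcan_append_com Γ A _ hcomA] <;>
                  [rw [mcan_cons_com Γ _ hcu, mcan_cons_com Γ _ hcv, hB];
                   rw [mcan_cons_com Γ _ hcv, mcan_cons_com Γ _ hcu, hB]] <;> rfl
            · refine cons_case ?_ ?_ <;> rw [mcan_append_com Γ A _ hcomA] <;>
                [rw [mcan_cons_com Γ _ hcu, mcan_cons_block Γ _ hv hcv];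
                 rw [mcan_cons_block Γ _ hv hcv]] <;> rfl
          · by_cases hcv : Γ.Adj x.1 v.1
            · refine cons_case ?_ ?_ <;> rw [mcan_append_com Γ A _ hcomA] <;>
                [rw [mcan_cons_block Γ _ hu hcu];
                 rw [mcan_cons_com Γ _ hcv, mcan_cons_block Γ _ hu hcu]] <;> rfl
            · refine cons_case ?_ ?_ <;> rw [mcan_append_com Γ A _ hcomA] <;>
                [rw [mcan_cons_block Γ _ hu hcu];
                 rw [mcan_cons_block Γ _ hv hcv]] <;> rfl
    · -- blocked inside A
      refine cons_case ?_ ?_ <;>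
        · rw [List.append_assoc, List.cons_append]
          exact mcan_append_block Γ A₁ _ hA₁ hz1 hz2

/-! ### The normal-form quotient and the action of the group -/

lemma wrel_push {x : Ltr ι} {L M : List (Ltr ι)} (h : wrel Γ L M) :
    wrel Γ (mpush Γ x L) (mpush Γ x M) := by
  induction h with
  | rel a b hab => exact swap_push Γ hab
  | refl a => exact Relation.EqvGen.refl _
  | symm a b _ ih => exact ih.symm _ _
  | trans a b c _ _ ih1 ih2 => exact ih1.trans _ _ _ ih2

lemma wrel_length {L M : List (Ltr ι)} (h : wrel Γ L M) : L.length = M.length := by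
  induction h with
  | rel a b hab => rcases hab with ⟨A, x, y, B, _, rfl, rfl⟩; simp
  | refl a => rfl
  | symm a b _ ih => exact ih.symm
  | trans a b c _ _ ih1 ih2 => exact ih1.trans ih2

lemma com_ev {x : Ltr ι} {P : List (Ltr ι)} (h : ∀ z ∈ P, Γ.Adj x.1 z.1) :
    Commute (gv Γ x) (ev Γ P) := by
  induction P with
  | nil => simp [Commute.one_right]
  | cons p P ih =>
    rw [ev_cons]
    exact (gv_comm Γ (h p (by simp))).mul_right (ih (fun z hz => h z (by simp [hz])))

lemma ev_mpush (x : Ltr ι) (L : List (Ltr ι)) :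
    ev Γ (mpush Γ x L) = gv Γ x * ev Γ L := by
  cases hc : mcan Γ x L with
  | none => rw [mpush_of_none Γ hc, ev_cons]
  | some L' =>
    rcases mcan_some Γ hc with ⟨P, T, hcom, rfl, rfl⟩
    rw [mpush_of_some Γ hc]
    have hco := com_ev Γ hcom
    simp only [ev_append, ev_cons, gv_linv]
    rw [← mul_assoc, ← mul_assoc, hco.eq, mul_assoc (ev Γ P), mul_inv_cancel, mul_one]

lemma wrel_ev {L M : List (Ltr ι)} (h : wrel Γ L M) : ev Γ L = ev Γ M := by
  induction h with
  | rel a b hab =>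
    rcases hab with ⟨A, x, y, B, hadj, rfl, rfl⟩
    simp only [ev_append, ev_cons, ← mul_assoc]
    rw [mul_assoc (ev Γ A), (gv_comm Γ hadj).eq, ← mul_assoc]
  | refl a => rfl
  | symm a b _ ih => exact ih.symm
  | trans a b c _ _ ih1 ih2 => exact ih1.trans ih2

def nfSetoid : Setoid {L : List (Ltr ι) // ¬ HasPair Γ L} :=
  ⟨fun a b => wrel Γ a.val b.val,
    fun _ => Relation.EqvGen.refl _,
    fun h => h.symm _ _,
    fun h1 h2 => h1.trans _ _ _ h2⟩

def NF := Quotient (nfSetoid Γ)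

noncomputable def pushNF (x : Ltr ι) : NF Γ → NF Γ :=
  Quotient.map' (fun L => ⟨mpush Γ x L.val, red_push Γ L.prop⟩)
    (fun _ _ hab => wrel_push Γ hab)

@[simp] lemma pushNF_mk (x : Ltr ι) (L : List (Ltr ι)) (h : ¬ HasPair Γ L) :
    pushNF Γ x (Quotient.mk (nfSetoid Γ) ⟨L, h⟩) =
      Quotient.mk (nfSetoid Γ) ⟨mpush Γ x L, red_push Γ h⟩ := rfl

noncomputable def pushEquiv (x : Ltr ι) : Equiv.Perm (NF Γ) where
  toFun := pushNF Γ x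
  invFun := pushNF Γ (linv x)
  left_inv := by
    refine fun q => Quotient.inductionOn q ?_
    rintro ⟨L, h⟩
    exact Quotient.sound (push_push_linv Γ h)
  right_inv := by
    refine fun q => Quotient.inductionOn q ?_
    rintro ⟨L, h⟩
    have := push_push_linv (x := linv x) Γ h
    rw [linv_linv] at this
    exact Quotient.sound this

lemma pushEquiv_comm {x y : Ltr ι} (hadj : Γ.Adj x.1 y.1) :
    pushEquiv Γ x * pushEquiv Γ y = pushEquiv Γ y * pushEquiv Γ x := by
  ext q
  refine Quotient.inductionOn q ?_
  rintro ⟨L, h⟩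
  exact Quotient.sound (push_comm Γ hadj L)

lemma commutator_eq_one {G : Type*} [Group G] {u v : G} (h : u * v = v * u) :
    u * v * u⁻¹ * v⁻¹ = 1 := by
  rw [h]; group

noncomputable def phi : Raag Γ →* Equiv.Perm (NF Γ) :=
  PresentedGroup.toGroup (f := fun a => pushEquiv Γ (a, true)) (by
    rintro r ⟨a, b, hadj, rfl⟩
    simp only [map_mul, map_inv, FreeGroup.lift_apply_of]
    exact commutator_eq_one (pushEquiv_comm Γ hadj))

lemma red_nil : ¬ HasPair Γ ([] : List (Ltr ι)) := by
  rintro ⟨A, B, C, x, hL, -⟩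
  simp at hL

noncomputable def emptyNF : NF Γ := Quotient.mk (nfSetoid Γ) ⟨[], red_nil Γ⟩

noncomputable def nfq (g : Raag Γ) : NF Γ := phi Γ g (emptyNF Γ)

noncomputable def lenQ : NF Γ → ℕ :=
  Quotient.lift (fun L => L.val.length) (fun _ _ hab => wrel_length Γ hab)

noncomputable def nlen (g : Raag Γ) : ℕ := lenQ Γ (nfq Γ g)

noncomputable def evQ : NF Γ → Raag Γ :=
  Quotient.lift (fun L => ev Γ L.val) (fun _ _ hab => wrel_ev Γ hab)

lemma phi_gv (x : Ltr ι) (q : NF Γ) : phi Γ (gv Γ x) q = pushNF Γ x q := by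
  cases x with | mk a b =>
  cases b
  · have h1 : phi Γ (gv Γ (a, false)) = (phi Γ (rgen Γ a))⁻¹ := by
      rw [← map_inv]; rfl
    rw [h1]
    have h2 : phi Γ (rgen Γ a) = pushEquiv Γ (a, true) := PresentedGroup.toGroup.of _
    rw [h2]
    rfl
  · have h2 : phi Γ (rgen Γ a) = pushEquiv Γ (a, true) := PresentedGroup.toGroup.of _
    show phi Γ (rgen Γ a) q = _
    rw [h2]; rfl

lemma evQ_pushNF (x : Ltr ι) (q : NF Γ) : evQ Γ (pushNF Γ x q) = gv Γ x * evQ Γ q := by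
  refine Quotient.inductionOn q ?_
  rintro ⟨L, h⟩
  exact ev_mpush Γ x L

lemma evQ_phi (g : Raag Γ) (q : NF Γ) : evQ Γ (phi Γ g q) = g * evQ Γ q := by
  let S : Subgroup (Raag Γ) :=
    { carrier := {g | ∀ q, evQ Γ (phi Γ g q) = g * evQ Γ q}
      one_mem' := by intro q; simp
      mul_mem' := by
        intro u v hu hv q
        rw [map_mul]
        have : (phi Γ u * phi Γ v) q = phi Γ u (phi Γ v q) := rfl
        rw [this, hu, hv, mul_assoc]
      inv_mem' := by
        intro u hu q
        have h1 := hu ((phi Γ u)⁻¹ q)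
        have h2 : phi Γ u ((phi Γ u)⁻¹ q) = q := by
          rw [← map_inv]
          have : phi Γ u (phi Γ u⁻¹ q) = (phi Γ u * phi Γ u⁻¹) q := rfl
          rw [this, ← map_mul, mul_inv_cancel, map_one]; rfl
        rw [h2] at h1
        rw [map_inv]
        rw [eq_inv_mul_iff_mul_eq, ← h1] }
  have hS : ∀ g : Raag Γ, g ∈ S := by
    intro g
    refine PresentedGroup.generated_by _ S ?_ g
    intro a q
    have : phi Γ (PresentedGroup.of a) = pushEquiv Γ (a, true) := PresentedGroup.toGroup.of _
    rw [this]
    have : pushEquiv Γ (a, true) q = pushNF Γ (a, true) q := rfl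
    rw [this, evQ_pushNF]
    rfl
  exact hS g q

lemma evQ_nfq (g : Raag Γ) : evQ Γ (nfq Γ g) = g := by
  rw [nfq, evQ_phi]
  have : evQ Γ (emptyNF Γ) = 1 := rfl
  rw [this, mul_one]

/-- A1 : every element has a reduced geodesic word. -/
lemma exists_red_word (g : Raag Γ) :
    ∃ L : List (Ltr ι), ¬ HasPair Γ L ∧ ev Γ L = g ∧ L.length = nlen Γ g := by
  obtain ⟨⟨L, h⟩, hq⟩ := Quotient.exists_rep (nfq Γ g)
  refine ⟨L, h, ?_, ?_⟩
  · have := evQ_nfq Γ g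
    rw [← hq] at this
    exact this
  · rw [nlen, ← hq]; rfl

lemma lenQ_pushNF_le (x : Ltr ι) (q : NF Γ) :
    lenQ Γ (pushNF Γ x q) ≤ lenQ Γ q + 1 := by
  refine Quotient.inductionOn q ?_
  rintro ⟨L, h⟩
  show (mpush Γ x L).length ≤ L.length + 1
  cases hc : mcan Γ x L with
  | none => rw [mpush_of_none Γ hc]; simp
  | some L' =>
    rcases mcan_some Γ hc with ⟨P, T, _, rfl, rfl⟩
    rw [mpush_of_some Γ hc]; simp; omega

lemma nfq_mul_gv (x : Ltr ι) (g : Raag Γ) :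
    nfq Γ (gv Γ x * g) = pushNF Γ x (nfq Γ g) := by
  rw [nfq, map_mul]
  have : (phi Γ (gv Γ x) * phi Γ g) (emptyNF Γ) = phi Γ (gv Γ x) (phi Γ g (emptyNF Γ)) := rfl
  rw [this, phi_gv]
  rfl

/-- A2 : `nlen` is dominated by the length of any representing word. -/
lemma nlen_ev_le (W : List (Ltr ι)) : nlen Γ (ev Γ W) ≤ W.length := by
  induction W with
  | nil =>
    show lenQ Γ (nfq Γ 1) ≤ 0
    rw [nfq, map_one]
    exact le_refl 0
  | cons x W ih =>
    rw [ev_cons, nlen, nfq_mul_gv]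
    calc lenQ Γ (pushNF Γ x (nfq Γ (ev Γ W))) ≤ lenQ Γ (nfq Γ (ev Γ W)) + 1 :=
          lenQ_pushNF_le Γ x _
    _ ≤ W.length + 1 := by exact Nat.add_le_add_right ih 1
    _ = (x :: W).length := by simp

lemma red_nfq {W : List (Ltr ι)} (h : ¬ HasPair Γ W) :
    nfq Γ (ev Γ W) = Quotient.mk (nfSetoid Γ) ⟨W, h⟩ := by
  induction W with
  | nil => rw [ev_nil, nfq, map_one]; rfl
  | cons x W ih =>
    have hW : ¬ HasPair Γ W := fun hp => h (haspair_cons Γ x hp)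
    have hcan : mcan Γ x W = none := by
      cases hc : mcan Γ x W with
      | none => rfl
      | some L' =>
        rcases mcan_some Γ hc with ⟨P, T, hcom, rfl, -⟩
        exact absurd (haspair_head Γ P T rfl hcom) h
    rw [ev_cons, nfq_mul_gv, ih hW, pushNF_mk]
    congr 1
    exact Subtype.ext (mpush_of_none Γ hcan)

/-- reduced words are geodesic. -/
lemma red_length {W : List (Ltr ι)} (h : ¬ HasPair Γ W) :
    nlen Γ (ev Γ W) = W.length := by
  rw [nlen, red_nfq Γ h]; rfl

/-- Lemma D : a non-geodesic word contains a cancelling pair. -/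
lemma haspair_of_lt {W : List (Ltr ι)} (h : nlen Γ (ev Γ W) < W.length) :
    HasPair Γ W := by
  by_contra hred
  rw [red_length Γ hred] at h
  exact lt_irrefl _ h


/-! ### basic length lemmas and auxiliary homomorphisms -/

lemma nlen_one : nlen Γ (1 : Raag Γ) = 0 := by
  rw [nlen, nfq, map_one]; rfl

lemma nlen_mul_le (g h : Raag Γ) : nlen Γ (g * h) ≤ nlen Γ g + nlen Γ h := by
  obtain ⟨Wg, -, hg, hlg⟩ := exists_red_word Γ g
  obtain ⟨Wh, -, hh, hlh⟩ := exists_red_word Γ h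
  have : ev Γ (Wg ++ Wh) = g * h := by rw [ev_append, hg, hh]
  have h2 := nlen_ev_le Γ (Wg ++ Wh)
  rw [this] at h2
  simpa [hlg, hlh] using h2

lemma ev_invRev (W : List (Ltr ι)) : ev Γ ((W.map linv).reverse) = (ev Γ W)⁻¹ := by
  induction W with
  | nil => simp
  | cons x W ih => simp [ih, mul_inv_rev]

lemma nlen_inv_le (g : Raag Γ) : nlen Γ g⁻¹ ≤ nlen Γ g := by
  obtain ⟨W, -, hg, hl⟩ := exists_red_word Γ g
  have : ev Γ ((W.map linv).reverse) = g⁻¹ := by rw [ev_invRev, hg]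
  have h2 := nlen_ev_le Γ ((W.map linv).reverse)
  rw [this] at h2
  simpa [hl] using h2

lemma nlen_inv (g : Raag Γ) : nlen Γ g⁻¹ = nlen Γ g := by
  refine le_antisymm (nlen_inv_le Γ g) ?_
  have := nlen_inv_le Γ g⁻¹
  simpa using this

lemma nlen_gv_le (x : Ltr ι) : nlen Γ (gv Γ x) ≤ 1 := by
  have : ev Γ [x] = gv Γ x := by simp
  have h2 := nlen_ev_le Γ [x]
  rw [this] at h2
  simpa using h2

lemma nlen_mul_gv_le (g : Raag Γ) (x : Ltr ι) :
    nlen Γ (g * gv Γ x) ≤ nlen Γ g + 1 :=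
  le_trans (nlen_mul_le Γ g (gv Γ x)) (by have := nlen_gv_le Γ x; omega)

lemma nlen_mul_gv_ge (g : Raag Γ) (x : Ltr ι) :
    nlen Γ g ≤ nlen Γ (g * gv Γ x) + 1 := by
  have h1 : g = (g * gv Γ x) * gv Γ (linv x) := by
    rw [gv_linv, mul_assoc, mul_inv_cancel, mul_one]
  calc nlen Γ g = nlen Γ ((g * gv Γ x) * gv Γ (linv x)) := by rw [← h1]
  _ ≤ nlen Γ (g * gv Γ x) + 1 := nlen_mul_gv_le Γ _ _

noncomputable def epsHom : Raag Γ →* Multiplicative (ZMod 2) :=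
  PresentedGroup.toGroup (f := fun _ => Multiplicative.ofAdd 1) (by
    rintro r ⟨a, b, hadj, rfl⟩
    simp only [map_mul, map_inv, FreeGroup.lift_apply_of]
    exact commutator_eq_one (mul_comm _ _))

lemma epsHom_gv (x : Ltr ι) : epsHom Γ (gv Γ x) = Multiplicative.ofAdd 1 := by
  cases x with | mk a b =>
  cases b
  · show epsHom Γ (rgen Γ a)⁻¹ = _
    rw [map_inv]
    have : epsHom Γ (rgen Γ a) = Multiplicative.ofAdd 1 := PresentedGroup.toGroup.of _
    rw [this]
    decide
  · exact PresentedGroup.toGroup.of _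

lemma epsHom_ev (W : List (Ltr ι)) :
    epsHom Γ (ev Γ W) = Multiplicative.ofAdd (W.length : ZMod 2) := by
  induction W with
  | nil => simp
  | cons x W ih =>
    rw [ev_cons, map_mul, ih, epsHom_gv]
    rw [← ofAdd_add]
    congr 1
    simp only [List.length_cons]
    push_cast
    ring

lemma epsHom_nlen (g : Raag Γ) :
    epsHom Γ g = Multiplicative.ofAdd ((nlen Γ g : ZMod 2)) := by
  obtain ⟨W, -, hg, hl⟩ := exists_red_word Γ g
  rw [← hg, epsHom_ev, hl, hg]

/-- right multiplication by a letter changes the length by exactly one. -/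
lemma nlen_mul_gv (g : Raag Γ) (x : Ltr ι) :
    nlen Γ (g * gv Γ x) = nlen Γ g + 1 ∨ nlen Γ g = nlen Γ (g * gv Γ x) + 1 := by
  have h1 := nlen_mul_gv_le Γ g x
  have h2 := nlen_mul_gv_ge Γ g x
  have hne : nlen Γ (g * gv Γ x) ≠ nlen Γ g := by
    intro he
    have e1 := epsHom_nlen Γ (g * gv Γ x)
    rw [map_mul, epsHom_nlen Γ g, epsHom_gv, he, ← ofAdd_add] at e1
    have h3 : ((nlen Γ g : ZMod 2) + 1) = (nlen Γ g : ZMod 2) :=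
      Multiplicative.ofAdd.injective e1
    have h4 : (1 : ZMod 2) = 0 := by
      have := h3
      rwa [add_eq_left] at this
    simp at h4
  omega

noncomputable def piHom (a : ι) : Raag Γ →* Multiplicative ℤ :=
  PresentedGroup.toGroup
    (f := fun i => Multiplicative.ofAdd (if i = a then (1 : ℤ) else 0)) (by
    rintro r ⟨i, b, hadj, rfl⟩
    simp only [map_mul, map_inv, FreeGroup.lift_apply_of]
    exact commutator_eq_one (mul_comm _ _))

noncomputable def piz (a : ι) (g : Raag Γ) : ℤ := Multiplicative.toAdd (piHom Γ a g)

lemma piz_mul (a : ι) (g h : Raag Γ) : piz Γ a (g * h) = piz Γ a g + piz Γ a h := by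
  rw [piz, map_mul]; rfl

lemma piz_one (a : ι) : piz Γ a (1 : Raag Γ) = 0 := by rw [piz, map_one]; rfl

lemma piz_inv (a : ι) (g : Raag Γ) : piz Γ a g⁻¹ = - piz Γ a g := by
  rw [piz, map_inv]; rfl

lemma piz_rgen (a b : ι) : piz Γ a (rgen Γ b) = if b = a then 1 else 0 := by
  rw [piz]
  have : piHom Γ a (rgen Γ b) = Multiplicative.ofAdd (if b = a then (1:ℤ) else 0) :=
    PresentedGroup.toGroup.of _
  rw [this]; rfl

lemma piz_gv (a : ι) (x : Ltr ι) :
    piz Γ a (gv Γ x) = if x.1 = a then (if x.2 then 1 else -1) else 0 := by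
  cases x with | mk b s =>
  cases s
  · show piz Γ a (rgen Γ b)⁻¹ = _
    rw [piz_inv, piz_rgen]
    by_cases h : b = a <;> simp [h]
  · show piz Γ a (rgen Γ b) = _
    rw [piz_rgen]
    by_cases h : b = a <;> simp [h]

lemma piz_gv_abs (a : ι) (x : Ltr ι) : (piz Γ a (gv Γ x)).natAbs ≤ 1 := by
  rw [piz_gv]
  by_cases h : x.1 = a <;> cases hx : x.2 <;> simp [h]

lemma piz_ev_le (a : ι) (W : List (Ltr ι)) : (piz Γ a (ev Γ W)).natAbs ≤ W.length := by
  induction W with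
  | nil => simp [piz_one]
  | cons x W ih =>
    rw [ev_cons, piz_mul]
    have h1 := piz_gv_abs Γ a x
    have h2 : (piz Γ a (gv Γ x) + piz Γ a (ev Γ W)).natAbs ≤
        (piz Γ a (gv Γ x)).natAbs + (piz Γ a (ev Γ W)).natAbs :=
      Int.natAbs_add_le _ _
    simp only [List.length_cons]
    omega

lemma piz_le_nlen (a : ι) (g : Raag Γ) : (piz Γ a g).natAbs ≤ nlen Γ g := by
  obtain ⟨W, -, hg, hl⟩ := exists_red_word Γ g
  rw [← hg]
  have := piz_ev_le Γ a W
  rw [hg] at this ⊢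
  rw [← hl]
  rw [← hg]
  exact piz_ev_le Γ a W

lemma piz_rgen_zpow (j : ι) (n : ℤ) : piz Γ j (rgen Γ j ^ n) = n := by
  have : piHom Γ j (rgen Γ j ^ n) = (piHom Γ j (rgen Γ j)) ^ n := map_zpow _ _ _
  rw [piz, this]
  have h0 := piz_rgen Γ j j
  rw [if_pos rfl] at h0
  have h2 : piHom Γ j (rgen Γ j) = Multiplicative.ofAdd (1 : ℤ) := by
    have := congrArg Multiplicative.ofAdd h0
    simpa [piz] using this
  rw [h2, ← ofAdd_zsmul]
  simp

noncomputable def rhoHom (j : ι) : Raag Γ →* Raag Γ :=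
  PresentedGroup.toGroup (f := fun a => if a = j then 1 else rgen Γ a) (by
    rintro r ⟨a, b, hadj, rfl⟩
    simp only [map_mul, map_inv, FreeGroup.lift_apply_of]
    refine commutator_eq_one ?_
    by_cases ha : a = j <;> by_cases hb : b = j <;> simp [ha, hb]
    exact (rgen_comm Γ hadj).eq)

lemma rhoHom_rgen (j a : ι) : rhoHom Γ j (rgen Γ a) = if a = j then 1 else rgen Γ a :=
  PresentedGroup.toGroup.of _

lemma rhoHom_gv (j : ι) (x : Ltr ι) :
    rhoHom Γ j (gv Γ x) = if x.1 = j then 1 else gv Γ x := by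
  cases x with | mk b s =>
  cases s
  · show rhoHom Γ j (rgen Γ b)⁻¹ = _
    rw [map_inv, rhoHom_rgen]
    by_cases h : b = j <;> simp [h] <;> rfl
  · show rhoHom Γ j (rgen Γ b) = _
    rw [rhoHom_rgen]
    by_cases h : b = j <;> simp [h, gv]

lemma rhoHom_ev (j : ι) (W : List (Ltr ι)) :
    rhoHom Γ j (ev Γ W) = ev Γ (W.filter (fun x => x.1 ≠ j)) := by
  induction W with
  | nil => simp
  | cons x W ih =>
    rw [ev_cons, map_mul, ih, rhoHom_gv]
    by_cases h : x.1 = j <;> simp [h, List.filter_cons]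


/-! ### words for powers, link words -/

lemma ev_replicate_true (j : ι) (k : ℕ) :
    ev Γ (List.replicate k (j, true)) = rgen Γ j ^ k := by
  induction k with
  | zero => simp
  | succ k ih =>
    rw [List.replicate_succ, ev_cons, ih]
    have h0 : gv Γ ((j, true) : Ltr ι) = rgen Γ j := rfl
    rw [h0, ← pow_succ']

lemma ev_replicate_false (j : ι) (k : ℕ) :
    ev Γ (List.replicate k (j, false)) = (rgen Γ j)⁻¹ ^ k := by
  induction k with
  | zero => simp
  | succ k ih =>
    rw [List.replicate_succ, ev_cons, ih]
    have h0 : gv Γ ((j, false) : Ltr ι) = (rgen Γ j)⁻¹ := rfl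
    rw [h0, ← pow_succ']

lemma exists_word_zpow (j : ι) (n : ℤ) :
    ∃ W : List (Ltr ι), ev Γ W = rgen Γ j ^ n ∧ W.length = n.natAbs ∧
      ∀ x ∈ W, x.1 = j := by
  rcases le_or_gt 0 n with hn | hn
  · refine ⟨List.replicate n.toNat (j, true), ?_, by simp; omega, ?_⟩
    · rw [ev_replicate_true, ← zpow_natCast]
      congr 1
      omega
    · intro x hx
      rw [List.eq_of_mem_replicate hx]
  · refine ⟨List.replicate (-n).toNat (j, false), ?_, by simp; omega, ?_⟩
    · rw [ev_replicate_false, inv_pow, ← zpow_natCast, ← zpow_neg]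
      congr 1
      omega
    · intro x hx
      rw [List.eq_of_mem_replicate hx]

lemma nlen_zpow_le (j : ι) (n : ℤ) : nlen Γ (rgen Γ j ^ n) ≤ n.natAbs := by
  obtain ⟨W, hW, hl, -⟩ := exists_word_zpow Γ j n
  have := nlen_ev_le Γ W
  rw [hW, hl] at this
  exact this

/-- `u` is represented by a word all of whose letters are adjacent to `i`. -/
def lkWord (i : ι) (u : Raag Γ) : Prop :=
  ∃ A : List (Ltr ι), ev Γ A = u ∧ ∀ x ∈ A, Γ.Adj i x.1

lemma lkWord_one (i : ι) : lkWord Γ i (1 : Raag Γ) := ⟨[], rfl, by simp⟩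

lemma lkWord_mul {i : ι} {u v : Raag Γ} (hu : lkWord Γ i u) (hv : lkWord Γ i v) :
    lkWord Γ i (u * v) := by
  obtain ⟨A, rfl, hA⟩ := hu
  obtain ⟨B, rfl, hB⟩ := hv
  refine ⟨A ++ B, by simp, ?_⟩
  intro x hx
  rcases List.mem_append.mp hx with h | h
  exacts [hA x h, hB x h]

lemma lkWord_commute {i : ι} {u : Raag Γ} (hu : lkWord Γ i u) :
    Commute (rgen Γ i) u := by
  obtain ⟨A, rfl, hA⟩ := hu
  have : Commute (gv Γ ((i, true) : Ltr ι)) (ev Γ A) := com_ev Γ (fun z hz => hA z hz)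
  exact this

lemma lkWord_commute_zpow {i : ι} {u : Raag Γ} (hu : lkWord Γ i u) (n : ℤ) :
    Commute (rgen Γ i ^ n) u := (lkWord_commute Γ hu).zpow_left n

lemma piz_ev_zero {j : ι} {W : List (Ltr ι)} (h : ∀ x ∈ W, x.1 ≠ j) :
    piz Γ j (ev Γ W) = 0 := by
  induction W with
  | nil => simp [piz_one]
  | cons x W ih =>
    rw [ev_cons, piz_mul, piz_gv, if_neg (h x (by simp)),
      ih (fun z hz => h z (by simp [hz])), add_zero]

lemma piz_lkWord {j : ι} {u : Raag Γ} (hu : lkWord Γ j u) : piz Γ j u = 0 := by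
  obtain ⟨A, rfl, hA⟩ := hu
  exact piz_ev_zero Γ (fun x hx => (Γ.ne_of_adj (hA x hx)).symm)

lemma rho_lkWord {j : ι} {u : Raag Γ} (hu : lkWord Γ j u) : rhoHom Γ j u = u := by
  obtain ⟨A, rfl, hA⟩ := hu
  rw [rhoHom_ev]
  congr 1
  refine List.filter_eq_self.mpr ?_
  intro x hx
  simpa using (Γ.ne_of_adj (hA x hx)).symm

lemma piz_le_count (j : ι) (W : List (Ltr ι)) :
    (piz Γ j (ev Γ W)).natAbs ≤ (W.filter (fun x => x.1 = j)).length := by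
  induction W with
  | nil => simp [piz_one]
  | cons x W ih =>
    rw [ev_cons, piz_mul]
    by_cases h : x.1 = j
    · have h1 := piz_gv_abs Γ j x
      have h2 := Int.natAbs_add_le (piz Γ j (gv Γ x)) (piz Γ j (ev Γ W))
      have h3 : ((x :: W).filter (fun x => x.1 = j)).length =
          (W.filter (fun x => x.1 = j)).length + 1 := by
        simp [List.filter_cons, h]
      omega
    · rw [piz_gv, if_neg h, zero_add]
      have h3 : ((x :: W).filter (fun x => x.1 = j)).length =
          (W.filter (fun x => x.1 = j)).length := by
        simp [List.filter_cons, h]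
      omega

/-- the crucial distance formula along a parallel coset: if `u` is a link word
for `j` then `|u jⁿ| = |u| + |n|`. -/
lemma nlen_lkWord_zpow {j : ι} {u : Raag Γ} (hu : lkWord Γ j u) (m : ℤ) :
    nlen Γ (u * rgen Γ j ^ m) = nlen Γ u + m.natAbs := by
  refine le_antisymm ?_ ?_
  · calc nlen Γ (u * rgen Γ j ^ m) ≤ nlen Γ u + nlen Γ (rgen Γ j ^ m) := nlen_mul_le Γ _ _
    _ ≤ nlen Γ u + m.natAbs := by have := nlen_zpow_le Γ j m; omega
  · obtain ⟨V, -, hV, hlV⟩ := exists_red_word Γ (u * rgen Γ j ^ m)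
    have hrho : rhoHom Γ j (u * rgen Γ j ^ m) = u := by
      rw [map_mul, rho_lkWord Γ hu, map_zpow, rhoHom_rgen, if_pos rfl, one_zpow, mul_one]
    have h1 : u = ev Γ (V.filter (fun x => x.1 ≠ j)) := by
      rw [← hrho, ← hV, rhoHom_ev]
    have h2 : nlen Γ u ≤ (V.filter (fun x => x.1 ≠ j)).length := by
      rw [h1]; exact nlen_ev_le Γ _
    have h3 : (piz Γ j (u * rgen Γ j ^ m)).natAbs ≤ (V.filter (fun x => x.1 = j)).length := by
      rw [← hV]; exact piz_le_count Γ j V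
    have h4 : piz Γ j (u * rgen Γ j ^ m) = m := by
      rw [piz_mul, piz_lkWord Γ hu, piz_rgen_zpow, zero_add]
    have h5 : V.length = (V.filter (fun x => x.1 = j)).length +
        (V.filter (fun x => x.1 ≠ j)).length := by
      have := V.length_eq_length_filter_add (fun x => decide (x.1 = j))
      simpa using this
    rw [h4] at h3
    omega

/-- deleting a cancelling pair does not change the value. -/
lemma ev_delete_pair {x : Ltr ι} (A B C : List (Ltr ι)) (hB : ∀ z ∈ B, Γ.Adj x.1 z.1) :
    ev Γ (A ++ x :: (B ++ linv x :: C)) = ev Γ (A ++ B ++ C) := by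
  have hco := com_ev Γ hB
  simp only [ev_append, ev_cons, gv_linv]
  rw [show ev Γ A * (gv Γ x * (ev Γ B * ((gv Γ x)⁻¹ * ev Γ C)))
      = ev Γ A * ((gv Γ x * ev Γ B) * (gv Γ x)⁻¹ * ev Γ C) by group,
    hco.eq]
  group


/-! ### V-shape of the distance along a standard geodesic -/

lemma haspair_snoc_elim {W : List (Ltr ι)} {w : Ltr ι} (h : HasPair Γ (W ++ [w])) :
    HasPair Γ W ∨ ∃ A B, W = A ++ linv w :: B ∧ ∀ z ∈ B, Γ.Adj w.1 z.1 := by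
  rcases h with ⟨A, B, C, x, hL, hB⟩
  rcases C.eq_nil_or_concat with rfl | ⟨C', c, rfl⟩
  · have h2 : W ++ [w] = (A ++ x :: B) ++ [linv x] := by
      rw [hL]; simp
    have h3 := List.append_inj' h2 (by simp)
    have h5 : w = linv x := List.head_eq_of_cons_eq h3.2
    have hx : x = linv w := by rw [h5, linv_linv]
    refine Or.inr ⟨A, B, ?_, ?_⟩
    · rw [h3.1, hx]
    · intro z hz
      have h4 := hB z hz
      rw [hx] at h4
      simpa using h4
  · have h2 : W ++ [w] = (A ++ x :: (B ++ linv x :: C')) ++ [c] := by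
      rw [hL]; simp
    have h3 := List.append_inj' h2 (by simp)
    exact Or.inl (by rw [h3.1]; exact ⟨A, B, C', x, rfl, hB⟩)

/-- no local maximum : `u·j` and `u·j⁻¹` cannot both be shorter than `u`. -/
lemma no_local_max (u : Raag Γ) (j : ι)
    (h1 : nlen Γ u = nlen Γ (u * rgen Γ j) + 1)
    (h2 : nlen Γ u = nlen Γ (u * (rgen Γ j)⁻¹) + 1) : False := by
  set b := nlen Γ (u * rgen Γ j) with hb
  obtain ⟨R, hRred, hRev, hRlen⟩ := exists_red_word Γ (u * rgen Γ j)
  have hgvf : gv Γ ((j, false) : Ltr ι) = (rgen Γ j)⁻¹ := rfl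
  have hgvt : gv Γ ((j, true) : Ltr ι) = rgen Γ j := rfl
  have hWev : ev Γ (R ++ [((j, false) : Ltr ι)]) = u := by
    rw [ev_append, hRev, ev_singleton, hgvf, mul_assoc, mul_inv_cancel, mul_one]
  have hWred : ¬ HasPair Γ (R ++ [((j, false) : Ltr ι)]) := by
    intro hp
    rcases haspair_snoc_elim Γ hp with hR | ⟨A, B, hRsplit, hBcom⟩
    · exact hRred hR
    · have hlinv : linv ((j, false) : Ltr ι) = ((j, true) : Ltr ι) := rfl
      rw [hlinv] at hRsplit
      have hcom : Commute (gv Γ ((j, true) : Ltr ι)) (ev Γ B) :=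
        com_ev Γ (fun z hz => hBcom z hz)
      have hu : u = ev Γ (A ++ B) := by
        rw [hRsplit] at hRev
        simp only [ev_append, ev_cons] at hRev
        rw [hcom.eq, hgvt] at hRev
        have h5 : (ev Γ A * ev Γ B) * rgen Γ j = u * rgen Γ j := by
          rw [← hRev]; group
        have h6 := mul_right_cancel h5
        rw [← h6, ev_append]
      have hle : nlen Γ u ≤ A.length + B.length := by
        rw [hu]
        have := nlen_ev_le Γ (A ++ B)
        simpa using this
      have hlen : R.length = A.length + 1 + B.length := by rw [hRsplit]; simp; omega
      omega
  have hW'ev : ev Γ ((R ++ [((j, false) : Ltr ι)]) ++ [((j, false) : Ltr ι)])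
      = u * (rgen Γ j)⁻¹ := by
    rw [ev_append, hWev, ev_singleton, hgvf]
  have hW'pair : HasPair Γ ((R ++ [((j, false) : Ltr ι)]) ++ [((j, false) : Ltr ι)]) := by
    apply haspair_of_lt
    rw [hW'ev]
    simp only [List.length_append, List.length_singleton, hRlen]
    omega
  rcases haspair_snoc_elim Γ hW'pair with hW | ⟨A, B, hsplit, hBcom⟩
  · exact hWred hW
  · have hlinv : linv ((j, false) : Ltr ι) = ((j, true) : Ltr ι) := rfl
    rw [hlinv] at hsplit
    rcases B.eq_nil_or_concat with rfl | ⟨B', c, rfl⟩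
    · have h3 := List.append_inj' (by rw [hsplit] : R ++ [((j, false) : Ltr ι)]
        = A ++ [((j, true) : Ltr ι)]) (by simp)
      have := List.head_eq_of_cons_eq h3.2
      simp at this
    · have h2 : R ++ [((j, false) : Ltr ι)] = (A ++ ((j, true) : Ltr ι) :: B') ++ [c] := by
        rw [hsplit]; simp
      have h3 := List.append_inj' h2 (by simp)
      have hR2 : R = A ++ ((j, true) : Ltr ι) :: B' := h3.1
      have hcom : Commute (gv Γ ((j, true) : Ltr ι)) (ev Γ B') :=
        com_ev Γ (fun z hz => hBcom z (by simp [hz]))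
      have hu : u = ev Γ (A ++ B') := by
        rw [hR2] at hRev
        simp only [ev_append, ev_cons] at hRev
        rw [hcom.eq, hgvt] at hRev
        have h5 : (ev Γ A * ev Γ B') * rgen Γ j = u * rgen Γ j := by
          rw [← hRev]; group
        have h6 := mul_right_cancel h5
        rw [← h6, ev_append]
      have hle : nlen Γ u ≤ A.length + B'.length := by
        rw [hu]
        have := nlen_ev_le Γ (A ++ B')
        simpa using this
      have hlen : R.length = A.length + 1 + B'.length := by rw [hR2]; simp; omega
      omega

/-- pure arithmetic : a ±1-step function with no local maximum which grows at
infinity is a perfect V. -/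
lemma vshape_arith (f : ℤ → ℕ) (C : ℤ)
    (hstep : ∀ n, f (n + 1) = f n + 1 ∨ f n = f (n + 1) + 1)
    (hmax : ∀ n, ¬(f n = f (n + 1) + 1 ∧ f n = f (n - 1) + 1))
    (hbound : ∀ n, (n + C).natAbs ≤ f n) :
    ∃ k, ∀ n, f n = f k + (n - k).natAbs := by
  have h0 : C.natAbs ≤ f 0 := by simpa using hbound 0
  set lo : ℤ := -C - (f 0 : ℤ) - 1
  set hi : ℤ := -C + (f 0 : ℤ) + 1
  have h0mem : (0 : ℤ) ∈ Finset.Icc lo hi := by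
    simp only [Finset.mem_Icc]
    constructor <;> [simp only [lo]; simp only [hi]] <;> omega
  obtain ⟨k, hk, hkmin⟩ := (Finset.Icc lo hi).exists_min_image f ⟨0, h0mem⟩
  have hglobal : ∀ n, f k ≤ f n := by
    intro n
    by_cases hn : n ∈ Finset.Icc lo hi
    · exact hkmin n hn
    · have h1 : (n + C).natAbs ≤ f n := hbound n
      have h2 : f 0 < (n + C).natAbs := by
        simp only [Finset.mem_Icc, lo, hi] at hn
        omega
      have := hkmin 0 h0mem
      omega
  -- going up
  have hup : ∀ d : ℕ, f (k + d) = f k + d ∧ f (k + d + 1) = f k + d + 1 := by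
    intro d
    induction d with
    | zero =>
      refine ⟨by simp, ?_⟩
      rcases hstep k with h | h
      · simpa using h
      · have := hglobal (k + 1); omega
    | succ d ih =>
      obtain ⟨ih1, ih2⟩ := ih
      have e1 : (k + (d + 1 : ℕ) : ℤ) = k + d + 1 := by push_cast; ring
      refine ⟨by rw [e1]; exact ih2, ?_⟩
      rcases hstep (k + d + 1) with h | h
      · rw [show (k + (d + 1 : ℕ) + 1 : ℤ) = k + d + 1 + 1 by push_cast; ring, h, ih2]
        push_cast; ring
      · exfalso
        refine hmax (k + d + 1) ⟨h, ?_⟩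
        rw [show (k + d + 1 - 1 : ℤ) = k + d by ring]
        omega
  -- going down
  have hdown : ∀ d : ℕ, f (k - d) = f k + d ∧ f (k - d - 1) = f k + d + 1 := by
    intro d
    induction d with
    | zero =>
      refine ⟨by simp, ?_⟩
      have hst := hstep (k - 1)
      rw [show (k - 1 + 1 : ℤ) = k by ring] at hst
      have hg := hglobal (k - 1)
      rw [show (k - ((0 : ℕ) : ℤ) - 1) = k - 1 by push_cast; ring]
      push_cast
      omega
    | succ d ih =>
      obtain ⟨ih1, ih2⟩ := ih
      have e1 : (k - ((d + 1 : ℕ) : ℤ)) = k - d - 1 := by push_cast; ring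
      have e2 : (k - ((d + 1 : ℕ) : ℤ) - 1) = k - d - 2 := by push_cast; ring
      constructor
      · rw [e1, ih2]; push_cast; ring
      · have hst := hstep (k - d - 2)
        rw [show (k - d - 2 + 1 : ℤ) = k - d - 1 by ring] at hst
        rcases hst with h | h
        · exfalso
          refine hmax (k - d - 1) ⟨?_, ?_⟩
          · rw [show (k - d - 1 + 1 : ℤ) = k - d by ring]; omega
          · rw [show (k - d - 1 - 1 : ℤ) = k - d - 2 by ring]; omega
        · rw [e2]; push_cast at ih2 ⊢; omega
  refine ⟨k, fun n => ?_⟩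
  rcases le_or_gt k n with hkn | hkn
  · have hd : n = k + ((n - k).toNat : ℤ) := by omega
    have := (hup (n - k).toNat).1
    rw [← hd] at this
    rw [this]
    congr 1
    omega
  · have hd : n = k - ((k - n).toNat : ℤ) := by omega
    have := (hdown (k - n).toNat).1
    rw [← hd] at this
    rw [this]
    congr 1
    omega

/-- V-shape of `n ↦ |v jⁿ|`. -/
lemma vshape (v : Raag Γ) (j : ι) :
    ∃ k : ℤ, ∀ n : ℤ,
      nlen Γ (v * rgen Γ j ^ n) = nlen Γ (v * rgen Γ j ^ k) + (n - k).natAbs := by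
  have hgvt : gv Γ ((j, true) : Ltr ι) = rgen Γ j := rfl
  have hgvf : gv Γ ((j, false) : Ltr ι) = (rgen Γ j)⁻¹ := rfl
  refine vshape_arith (fun n => nlen Γ (v * rgen Γ j ^ n)) (piz Γ j v) ?_ ?_ ?_
  · intro n
    have e1 : v * rgen Γ j ^ (n + 1) = (v * rgen Γ j ^ n) * gv Γ ((j, true) : Ltr ι) := by
      rw [hgvt, zpow_add_one, mul_assoc]
    rw [e1]
    exact nlen_mul_gv Γ _ _
  · intro n hcontra
    obtain ⟨hA, hB⟩ := hcontra
    refine no_local_max Γ (v * rgen Γ j ^ n) j ?_ ?_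
    · rw [mul_assoc, ← zpow_add_one]; exact hA
    · rw [mul_assoc, ← zpow_sub_one]; exact hB
  · intro n
    have h1 : piz Γ j (v * rgen Γ j ^ n) = piz Γ j v + n := by
      rw [piz_mul, piz_rgen_zpow]
    have h2 := piz_le_nlen Γ j (v * rgen Γ j ^ n)
    rw [h1] at h2
    have h3 : (n + piz Γ j v).natAbs = (piz Γ j v + n).natAbs := by
      rw [add_comm]
    omega

/-- the projection parameter : the (unique) minimum of `n ↦ |v jⁿ|`. -/
noncomputable def kmin (v : Raag Γ) (j : ι) : ℤ := Classical.choose (vshape Γ v j)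

lemma kmin_spec (v : Raag Γ) (j : ι) :
    ∀ n : ℤ, nlen Γ (v * rgen Γ j ^ n)
      = nlen Γ (v * rgen Γ j ^ kmin Γ v j) + (n - kmin Γ v j).natAbs :=
  Classical.choose_spec (vshape Γ v j)

lemma kmin_unique {v : Raag Γ} {j : ι} {k : ℤ}
    (h : ∀ n : ℤ, nlen Γ (v * rgen Γ j ^ n)
      = nlen Γ (v * rgen Γ j ^ k) + (n - k).natAbs) : k = kmin Γ v j := by
  have h1 := kmin_spec Γ v j k
  have h2 := h (kmin Γ v j)
  omega


/-! ### the pivot lemma -/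

lemma nlen_lmul_gv_le (x : Ltr ι) (g : Raag Γ) :
    nlen Γ (gv Γ x * g) ≤ nlen Γ g + 1 := by
  have := nlen_mul_le Γ (gv Γ x) g
  have h2 := nlen_gv_le Γ x
  omega

lemma nlen_lmul_gv_ge (x : Ltr ι) (g : Raag Γ) :
    nlen Γ g ≤ nlen Γ (gv Γ x * g) + 1 := by
  have h1 : g = gv Γ (linv x) * (gv Γ x * g) := by
    rw [gv_linv, ← mul_assoc, inv_mul_cancel, one_mul]
  calc nlen Γ g = nlen Γ (gv Γ (linv x) * (gv Γ x * g)) := by rw [← h1]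
  _ ≤ nlen Γ (gv Γ x * g) + 1 := nlen_lmul_gv_le Γ _ _

/-- T4' : if multiplying on the left by `x⁻¹` and on the right by `y` both
increase the length, but doing both at once decreases it back, then `x = y` and
the element is a link word for `x`. -/
lemma pivot {x y : Ltr ι} {u : Raag Γ}
    (h1 : nlen Γ ((gv Γ x)⁻¹ * u * gv Γ y) = nlen Γ u)
    (h2 : nlen Γ (u * gv Γ y) = nlen Γ u + 1)
    (h3 : nlen Γ ((gv Γ x)⁻¹ * u) = nlen Γ u + 1) :
    y = x ∧ lkWord Γ x.1 u := by
  obtain ⟨A, hAred, hAev, hAlen⟩ := exists_red_word Γ u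
  set a := nlen Γ u with ha
  have hWev : ev Γ (linv x :: (A ++ [y])) = (gv Γ x)⁻¹ * u * gv Γ y := by
    rw [ev_cons, ev_append, hAev, ev_singleton, gv_linv, mul_assoc]
  have hWpair : HasPair Γ (linv x :: (A ++ [y])) := by
    apply haspair_of_lt
    rw [hWev, h1]
    simp only [List.length_cons, List.length_append, List.length_singleton, hAlen]
    omega
  rcases haspair_cons_elim Γ hWpair with ⟨B, C, hBC, hBcom⟩ | htail
  · rw [linv_linv] at hBC
    have hBcom' : ∀ z ∈ B, Γ.Adj x.1 z.1 := fun z hz => by simpa using hBcom z hz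
    rcases C.eq_nil_or_concat with rfl | ⟨C', c, rfl⟩
    · -- A ++ [y] = B ++ [x] : so A = B and y = x
      have h4 := List.append_inj' hBC (by simp)
      have h5 : y = x := by
        have := List.head_eq_of_cons_eq h4.2
        exact this
      refine ⟨h5, ⟨A, hAev, ?_⟩⟩
      intro z hz
      rw [h4.1] at hz
      exact hBcom' z hz
    · -- the partner x lies inside A : contradicts h3
      exfalso
      have h4 : A ++ [y] = (B ++ x :: C') ++ [c] := by rw [hBC]; simp
      have h5 := List.append_inj' h4 (by simp)
      have hA2 : A = B ++ x :: C' := h5.1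
      have hcom : Commute (gv Γ x) (ev Γ B) := com_ev Γ hBcom'
      have hu : (gv Γ x)⁻¹ * u = ev Γ (B ++ C') := by
        rw [← hAev, hA2]
        simp only [ev_append, ev_cons]
        rw [← mul_assoc, (hcom.inv_left).eq]
        group
      have hle : nlen Γ ((gv Γ x)⁻¹ * u) ≤ B.length + C'.length := by
        rw [hu]
        have := nlen_ev_le Γ (B ++ C')
        simpa using this
      have hlen : A.length = B.length + 1 + C'.length := by rw [hA2]; simp; omega
      omega
  · -- a pair inside A ++ [y]
    exfalso
    rcases haspair_snoc_elim Γ htail with hA | ⟨A', B', hA2, hB'com⟩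
    · exact hAred hA
    · have hcom : Commute (gv Γ y) (ev Γ B') :=
        com_ev Γ (fun z hz => hB'com z hz)
      have hu : u * gv Γ y = ev Γ (A' ++ B') := by
        rw [← hAev, hA2]
        simp only [ev_append, ev_cons, gv_linv]
        rw [show ev Γ A' * ((gv Γ y)⁻¹ * ev Γ B') * gv Γ y
            = ev Γ A' * (gv Γ y)⁻¹ * (ev Γ B' * gv Γ y) by group, ← hcom.eq]
        group
      have hle : nlen Γ (u * gv Γ y) ≤ A'.length + B'.length := by
        rw [hu]
        have := nlen_ev_le Γ (A' ++ B')
        simpa using this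
      have hlen : A.length = A'.length + 1 + B'.length := by rw [hA2]; simp; omega
      omega

/-! ### the jump lemma -/

lemma jump {v : Raag Γ} {j : ι} {x : Ltr ι}
    (hne : kmin Γ ((gv Γ x)⁻¹ * v) j ≠ kmin Γ v j) :
    x.1 = j ∧ lkWord Γ j (v * rgen Γ j ^ (kmin Γ v j)) := by
  set k₁ := kmin Γ v j with hk₁
  set k₂ := kmin Γ ((gv Γ x)⁻¹ * v) j with hk₂
  set a₁ := nlen Γ (v * rgen Γ j ^ k₁) with ha₁
  set a₂ := nlen Γ ((gv Γ x)⁻¹ * v * rgen Γ j ^ k₂) with ha₂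
  have spec₁ := kmin_spec Γ v j
  have spec₂ := kmin_spec Γ ((gv Γ x)⁻¹ * v) j
  have hpt : ∀ n : ℤ, nlen Γ ((gv Γ x)⁻¹ * v * rgen Γ j ^ n)
      ≤ nlen Γ (v * rgen Γ j ^ n) + 1 ∧
      nlen Γ (v * rgen Γ j ^ n) ≤ nlen Γ ((gv Γ x)⁻¹ * v * rgen Γ j ^ n) + 1 := by
    intro n
    have e1 : (gv Γ x)⁻¹ * v * rgen Γ j ^ n = gv Γ (linv x) * (v * rgen Γ j ^ n) := by
      rw [gv_linv, mul_assoc]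
    rw [e1]
    exact ⟨nlen_lmul_gv_le Γ _ _, nlen_lmul_gv_ge Γ _ _⟩
  -- compare at the two minima
  have hcmp : a₁ = a₂ ∧ (k₂ = k₁ + 1 ∨ k₂ = k₁ - 1) := by
    have h1 := (hpt k₂).1
    have h2 := (hpt k₂).2
    have h3 := (hpt k₁).1
    have h4 := (hpt k₁).2
    rw [spec₁ k₂, spec₂ k₂] at h1 h2
    rw [spec₁ k₁, spec₂ k₁] at h3 h4
    simp only [← hk₁, ← hk₂, ← ha₁, ← ha₂] at h1 h2 h3 h4
    have hne' : k₂ ≠ k₁ := hne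
    omega
  obtain ⟨haa, hk⟩ := hcmp
  rcases hk with hk | hk
  · -- k₂ = k₁ + 1, use y = (j, true)
    have hgvt : gv Γ ((j, true) : Ltr ι) = rgen Γ j := rfl
    have s2 : nlen Γ (v * rgen Γ j ^ (k₁ + 1)) = a₁ + 1 := by
      rw [spec₁ (k₁ + 1), ← ha₁]
      congr 1
      omega
    have s3 : nlen Γ ((gv Γ x)⁻¹ * v * rgen Γ j ^ k₁) = a₁ + 1 := by
      rw [spec₂ k₁, ← ha₂, ← haa]
      congr 1
      omega
    have s4 : nlen Γ ((gv Γ x)⁻¹ * v * rgen Γ j ^ (k₁ + 1)) = a₁ := by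
      rw [spec₂ (k₁ + 1), ← ha₂, ← haa]
      have : ((k₁ + 1 - k₂).natAbs) = 0 := by omega
      rw [this, add_zero]
    have p2 : nlen Γ ((v * rgen Γ j ^ k₁) * gv Γ ((j, true) : Ltr ι))
        = nlen Γ (v * rgen Γ j ^ k₁) + 1 := by
      rw [hgvt, mul_assoc, ← zpow_add_one, s2, ← ha₁]
    have p3 : nlen Γ ((gv Γ x)⁻¹ * (v * rgen Γ j ^ k₁))
        = nlen Γ (v * rgen Γ j ^ k₁) + 1 := by
      rw [← mul_assoc, s3, ← ha₁]
    have p1 : nlen Γ ((gv Γ x)⁻¹ * (v * rgen Γ j ^ k₁) * gv Γ ((j, true) : Ltr ι))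
        = nlen Γ (v * rgen Γ j ^ k₁) := by
      rw [hgvt, ← mul_assoc, mul_assoc ((gv Γ x)⁻¹ * v), ← zpow_add_one, s4, ← ha₁]
    obtain ⟨hyx, hlk⟩ := pivot Γ p1 p2 p3
    rcases hyx.symm with rfl
    exact ⟨rfl, hlk⟩
  · -- k₂ = k₁ - 1, use y = (j, false)
    have hgvf : gv Γ ((j, false) : Ltr ι) = (rgen Γ j)⁻¹ := rfl
    have s2 : nlen Γ (v * rgen Γ j ^ (k₁ - 1)) = a₁ + 1 := by
      rw [spec₁ (k₁ - 1), ← ha₁]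
      congr 1
      omega
    have s3 : nlen Γ ((gv Γ x)⁻¹ * v * rgen Γ j ^ k₁) = a₁ + 1 := by
      rw [spec₂ k₁, ← ha₂, ← haa]
      congr 1
      omega
    have s4 : nlen Γ ((gv Γ x)⁻¹ * v * rgen Γ j ^ (k₁ - 1)) = a₁ := by
      rw [spec₂ (k₁ - 1), ← ha₂, ← haa]
      have : ((k₁ - 1 - k₂).natAbs) = 0 := by omega
      rw [this, add_zero]
    have p2 : nlen Γ ((v * rgen Γ j ^ k₁) * gv Γ ((j, false) : Ltr ι))
        = nlen Γ (v * rgen Γ j ^ k₁) + 1 := by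
      rw [hgvf, mul_assoc, ← zpow_sub_one, s2, ← ha₁]
    have p3 : nlen Γ ((gv Γ x)⁻¹ * (v * rgen Γ j ^ k₁))
        = nlen Γ (v * rgen Γ j ^ k₁) + 1 := by
      rw [← mul_assoc, s3, ← ha₁]
    have p1 : nlen Γ ((gv Γ x)⁻¹ * (v * rgen Γ j ^ k₁) * gv Γ ((j, false) : Ltr ι))
        = nlen Γ (v * rgen Γ j ^ k₁) := by
      rw [hgvf, ← mul_assoc, mul_assoc ((gv Γ x)⁻¹ * v), ← zpow_sub_one, s4, ← ha₁]
    obtain ⟨hyx, hlk⟩ := pivot Γ p1 p2 p3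
    rcases hyx.symm with rfl
    exact ⟨rfl, hlk⟩


/-! ### the graph distance on the Cayley graph is the word length -/

lemma gv_ne_one (x : Ltr ι) : gv Γ x ≠ 1 := by
  intro h
  have h1 := piz_gv Γ x.1 x
  rw [h, piz_one, if_pos rfl] at h1
  cases hx : x.2 <;> rw [hx] at h1 <;> simp at h1

lemma cayley_adj_gv (g : Raag Γ) (x : Ltr ι) : (cayley Γ).Adj g (g * gv Γ x) := by
  refine ⟨?_, x.1, ?_⟩
  · intro h
    have : gv Γ x = 1 := by
      have := mul_left_cancel (h.symm.trans (mul_one g).symm)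
      rw [← this]
    exact gv_ne_one Γ x this
  · cases hx : x.2
    · right
      have : gv Γ x = (rgen Γ x.1)⁻¹ := by rw [gv, hx]; simp
      rw [this, mul_assoc, inv_mul_cancel, mul_one]
    · left
      have : gv Γ x = rgen Γ x.1 := by rw [gv, hx]; simp
      rw [this]

lemma walk_of_word (g : Raag Γ) (W : List (Ltr ι)) :
    ∃ p : (cayley Γ).Walk g (g * ev Γ W), p.length = W.length := by
  induction W generalizing g with
  | nil =>
    refine ⟨SimpleGraph.Walk.nil.copy rfl (by rw [ev_nil, mul_one]), ?_⟩
    rw [SimpleGraph.Walk.length_copy]; rfl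
  | cons x W ih =>
    obtain ⟨p, hp⟩ := ih (g * gv Γ x)
    refine ⟨(SimpleGraph.Walk.cons (cayley_adj_gv Γ g x) p).copy rfl
      (by rw [ev_cons, mul_assoc]), ?_⟩
    simp [hp]

lemma cayley_reachable (g h : Raag Γ) : (cayley Γ).Reachable g h := by
  obtain ⟨W, -, hW, -⟩ := exists_red_word Γ (g⁻¹ * h)
  obtain ⟨p, -⟩ := walk_of_word Γ g W
  rw [hW] at p
  exact ⟨p.copy rfl (by rw [← mul_assoc, mul_inv_cancel, one_mul])⟩

lemma word_of_walk {g h : Raag Γ} (p : (cayley Γ).Walk g h) :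
    ∃ W : List (Ltr ι), ev Γ W = g⁻¹ * h ∧ W.length = p.length := by
  induction p with
  | nil => exact ⟨[], by simp, by simp⟩
  | @cons g b h hadj p ih =>
    obtain ⟨W, hW, hl⟩ := ih
    obtain ⟨hne, i, hi⟩ := hadj
    rcases hi with hi | hi
    · refine ⟨(i, true) :: W, ?_, by simp [hl]; rfl⟩
      rw [ev_cons, hW]
      have hgv : gv Γ ((i, true) : Ltr ι) = rgen Γ i := rfl
      rw [hgv, hi]
      group
    · refine ⟨(i, false) :: W, ?_, by simp [hl]; rfl⟩
      rw [ev_cons, hW]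
      have hgv : gv Γ ((i, false) : Ltr ι) = (rgen Γ i)⁻¹ := rfl
      rw [hgv, hi]
      group

lemma dist_eq_nlen (g h : Raag Γ) : (cayley Γ).dist g h = nlen Γ (g⁻¹ * h) := by
  refine le_antisymm ?_ ?_
  · obtain ⟨W, -, hW, hl⟩ := exists_red_word Γ (g⁻¹ * h)
    obtain ⟨p, hp⟩ := walk_of_word Γ g W
    have hend : g * ev Γ W = h := by rw [hW, ← mul_assoc, mul_inv_cancel, one_mul]
    have := SimpleGraph.dist_le (p.copy rfl hend)
    rwa [SimpleGraph.Walk.length_copy, hp, hl] at this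
  · obtain ⟨p, hp⟩ := (cayley_reachable Γ g h).exists_walk_length_eq_dist
    obtain ⟨W, hW, hl⟩ := word_of_walk Γ p
    have := nlen_ev_le Γ W
    rw [hW, hl, hp] at this
    exact this

/-! ### projections onto standard geodesics -/

lemma stdGeod_nonempty (g : Raag Γ) (i : ι) : (stdGeod Γ g i).Nonempty :=
  ⟨g, 0, by simp⟩

lemma stdGeod_shift (g : Raag Γ) (i : ι) (t : ℤ) :
    stdGeod Γ (g * rgen Γ i ^ t) i = stdGeod Γ g i := by
  ext w
  constructor
  · rintro ⟨n, rfl⟩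
    exact ⟨t + n, by rw [zpow_add, mul_assoc]⟩
  · rintro ⟨n, rfl⟩
    exact ⟨n - t, by rw [mul_assoc, ← zpow_add]; congr 2; ring⟩

lemma setDistN_stdGeod (x : Raag Γ) (gb : Raag Γ) (jb : ι) :
    setDistN (cayley Γ) x (stdGeod Γ gb jb)
      = nlen Γ (x⁻¹ * gb * rgen Γ jb ^ (kmin Γ (x⁻¹ * gb) jb)) := by
  refine le_antisymm ?_ ?_
  · apply Nat.sInf_le
    refine ⟨gb * rgen Γ jb ^ (kmin Γ (x⁻¹ * gb) jb), ⟨_, rfl⟩, ?_⟩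
    dsimp only
    rw [dist_eq_nlen, ← mul_assoc]
  · apply le_csInf
    · exact ⟨_, ⟨gb, ⟨0, by simp⟩, rfl⟩⟩
    · rintro b ⟨w, ⟨n, rfl⟩, rfl⟩
      dsimp only
      rw [dist_eq_nlen, ← mul_assoc, kmin_spec Γ (x⁻¹ * gb) jb n]
      omega

lemma nearest_of_kmin (x : Raag Γ) (gb : Raag Γ) (jb : ι) :
    NearestPt (cayley Γ) (stdGeod Γ gb jb) x
      (gb * rgen Γ jb ^ (kmin Γ (x⁻¹ * gb) jb)) := by
  refine ⟨⟨_, rfl⟩, ?_⟩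
  rintro w ⟨n, rfl⟩ hne
  have hn : n ≠ kmin Γ (x⁻¹ * gb) jb := by
    rintro rfl
    exact hne rfl
  rw [dist_eq_nlen, dist_eq_nlen, ← mul_assoc, ← mul_assoc,
    kmin_spec Γ (x⁻¹ * gb) jb n, kmin_spec Γ (x⁻¹ * gb) jb (kmin Γ (x⁻¹ * gb) jb)]
  have : (n - kmin Γ (x⁻¹ * gb) jb).natAbs ≠ 0 := by omega
  omega

/-- standard geodesics over parallel cosets (differing by a link word) are
parallel sets. -/
lemma parsets_coset {i : ι} (z u : Raag Γ) (hu : lkWord Γ i u) :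
    ParSets (cayley Γ) (stdGeod Γ z i) (stdGeod Γ (z * u) i) := by
  have hcz : ∀ t n : ℤ, (z * rgen Γ i ^ t)⁻¹ * (z * u * rgen Γ i ^ n)
      = u * rgen Γ i ^ (n - t) := by
    intro t n
    have h1 : (z * rgen Γ i ^ t)⁻¹ * (z * u * rgen Γ i ^ n)
        = rgen Γ i ^ (-t) * u * rgen Γ i ^ n := by group
    rw [h1, (lkWord_commute_zpow Γ hu (-t)).eq, mul_assoc, ← zpow_add]
    congr 2
    ring
  have hcz' : ∀ t n : ℤ, (z * u * rgen Γ i ^ n)⁻¹ * (z * rgen Γ i ^ t)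
      = u⁻¹ * rgen Γ i ^ (t - n) := by
    intro t n
    have hu' : lkWord Γ i u⁻¹ := by
      obtain ⟨A, rfl, hA⟩ := hu
      refine ⟨(A.map linv).reverse, ev_invRev Γ A, ?_⟩
      intro x hx
      simp only [List.mem_reverse, List.mem_map] at hx
      obtain ⟨y, hy, rfl⟩ := hx
      simpa using hA y hy
    have h1 : (z * u * rgen Γ i ^ n)⁻¹ * (z * rgen Γ i ^ t)
        = rgen Γ i ^ (-n) * u⁻¹ * rgen Γ i ^ t := by group
    rw [h1, (lkWord_commute_zpow Γ hu' (-n)).eq, mul_assoc, ← zpow_add]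
    congr 2
    ring
  have hdist : ∀ t n : ℤ, (cayley Γ).dist (z * rgen Γ i ^ t) (z * u * rgen Γ i ^ n)
      = nlen Γ u + (n - t).natAbs := by
    intro t n
    rw [dist_eq_nlen, hcz t n, nlen_lkWord_zpow Γ hu]
  have hdist' : ∀ t n : ℤ, (cayley Γ).dist (z * u * rgen Γ i ^ n) (z * rgen Γ i ^ t)
      = nlen Γ u + (t - n).natAbs := by
    intro t n
    have hu' : lkWord Γ i u⁻¹ := by
      obtain ⟨A, rfl, hA⟩ := hu
      refine ⟨(A.map linv).reverse, ev_invRev Γ A, ?_⟩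
      intro x hx
      simp only [List.mem_reverse, List.mem_map] at hx
      obtain ⟨y, hy, rfl⟩ := hx
      simpa using hA y hy
    rw [dist_eq_nlen, hcz' t n, nlen_lkWord_zpow Γ hu', nlen_inv]
  refine ⟨stdGeod_nonempty Γ z i, stdGeod_nonempty Γ (z * u) i, nlen Γ u, ?_, ?_⟩
  · rintro a ⟨t, rfl⟩
    refine le_antisymm ?_ ?_
    · apply Nat.sInf_le
      exact ⟨z * u * rgen Γ i ^ t, ⟨t, rfl⟩, by dsimp only; rw [hdist t t]; simp⟩
    · apply le_csInf
      · exact ⟨_, ⟨z * u, ⟨0, by simp⟩, rfl⟩⟩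
      · rintro b ⟨w, ⟨n, rfl⟩, rfl⟩
        dsimp only
        rw [hdist t n]
        omega
  · rintro b ⟨n, rfl⟩
    refine le_antisymm ?_ ?_
    · apply Nat.sInf_le
      exact ⟨z * rgen Γ i ^ n, ⟨n, rfl⟩, by dsimp only; rw [hdist' n n]; simp⟩
    · apply le_csInf
      · exact ⟨_, ⟨z, ⟨0, by simp⟩, rfl⟩⟩
      · rintro b' ⟨w, ⟨t, rfl⟩, rfl⟩
        dsimp only
        rw [hdist' t n]
        omega


/-! ### classification of parallel standard geodesics -/

lemma piz_rgen_zpow' (a b : ι) (n : ℤ) :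
    piz Γ a (rgen Γ b ^ n) = if b = a then n else 0 := by
  have h1 : piHom Γ a (rgen Γ b ^ n) = (piHom Γ a (rgen Γ b)) ^ n := map_zpow _ _ _
  have h0 := piz_rgen Γ a b
  have h2 : piHom Γ a (rgen Γ b) = Multiplicative.ofAdd (if b = a then (1:ℤ) else 0) := by
    have := congrArg Multiplicative.ofAdd h0
    simpa [piz] using this
  rw [piz, h1, h2, ← ofAdd_zsmul]
  by_cases h : b = a <;> simp [h]

lemma steps_up (K : ℤ → ℤ) (hinj : Function.Injective K)
    (hstep : ∀ t, K (t + 1) = K t + 1 ∨ K (t + 1) = K t - 1)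
    (h0 : K 1 = K 0 + 1) : ∀ t, K t = K 0 + t := by
  have main : ∀ t : ℤ, K t = K 0 + t ∧ K (t + 1) = K t + 1 := by
    intro t
    induction t using Int.induction_on with
    | zero => exact ⟨by ring, by simpa using h0⟩
    | succ n ih =>
      obtain ⟨ih1, ih2⟩ := ih
      refine ⟨by omega, ?_⟩
      rcases hstep ((n : ℤ) + 1) with h | h
      · exact h
      · exfalso
        have h2 : K ((n : ℤ) + 1 + 1) = K n := by omega
        have := hinj h2
        omega
    | pred n ih =>
      obtain ⟨ih1, ih2⟩ := ih
      rcases hstep (-(n : ℤ) - 1) with h | h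
      · rw [show (-(n : ℤ) - 1 + 1) = -(n : ℤ) by ring] at h
        exact ⟨by omega, by rw [show (-(n : ℤ) - 1 + 1) = -(n : ℤ) by ring]; omega⟩
      · exfalso
        rw [show (-(n : ℤ) - 1 + 1) = -(n : ℤ) by ring] at h
        have h2 : K (-(n : ℤ) - 1) = K (-(n : ℤ) + 1) := by omega
        have := hinj h2
        omega
  exact fun t => (main t).1

lemma steps_arith (K : ℤ → ℤ) (hinj : Function.Injective K)
    (hstep : ∀ t, K (t + 1) = K t + 1 ∨ K (t + 1) = K t - 1) :
    (∀ t, K t = K 0 + t) ∨ (∀ t, K t = K 0 - t) := by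
  rcases hstep 0 with h0 | h0
  · exact Or.inl (steps_up K hinj hstep (by simpa using h0))
  · right
    have hinj' : Function.Injective (fun t => -(K t)) := by
      intro a b hab
      simp only [neg_inj] at hab
      exact hinj hab
    have hstep' : ∀ t, -(K (t + 1)) = -(K t) + 1 ∨ -(K (t + 1)) = -(K t) - 1 := by
      intro t
      rcases hstep t with h | h
      · right; omega
      · left; omega
    have h0' : -(K 1) = -(K 0) + 1 := by
      simp only [zero_add] at h0
      omega
    have := steps_up (fun t => -(K t)) hinj' hstep' h0'
    intro t
    have ht := this t
    omega

lemma parsets_symm {V : Type} {G : SimpleGraph V} {A B : Set V}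
    (h : ParSets G A B) : ParSets G B A := by
  obtain ⟨hA, hB, c, h1, h2⟩ := h
  exact ⟨hB, hA, c, h2, h1⟩

/-- classification : a standard geodesic parallel to `stdGeod g i` has the same
direction and differs by a link word. -/
lemma parallel_classify {g g₂ : Raag Γ} {i i₂ : ι}
    (hp : ParSets (cayley Γ) (stdGeod Γ g i) (stdGeod Γ g₂ i₂)) :
    i₂ = i ∧ ∃ (u : Raag Γ) (q : ℤ), lkWord Γ i u ∧ g₂ = g * u * rgen Γ i ^ q := by
  obtain ⟨-, -, c, hA, hB⟩ := hp
  set w₂ := g⁻¹ * g₂ with hw₂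
  -- the bivariate distance function
  have hxinv : ∀ t : ℤ, (g * rgen Γ i ^ t)⁻¹ * g₂ = rgen Γ i ^ (-t) * w₂ := by
    intro t
    rw [hw₂]; group
  have hyinv : ∀ n : ℤ, (g₂ * rgen Γ i₂ ^ n)⁻¹ * g = (rgen Γ i₂ ^ (-n) * w₂⁻¹) := by
    intro n
    rw [hw₂]; group
  set K : ℤ → ℤ := fun t => kmin Γ (rgen Γ i ^ (-t) * w₂) i₂ with hK
  set D : ℤ → ℤ := fun n => kmin Γ (rgen Γ i₂ ^ (-n) * w₂⁻¹) i with hD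
  -- each horizontal minimum value is c
  have hKc : ∀ t : ℤ, nlen Γ (rgen Γ i ^ (-t) * w₂ * rgen Γ i₂ ^ (K t)) = c := by
    intro t
    have := hA (g * rgen Γ i ^ t) ⟨t, rfl⟩
    rw [setDistN_stdGeod, hxinv t] at this
    exact this
  have hDc : ∀ n : ℤ, nlen Γ (rgen Γ i₂ ^ (-n) * w₂⁻¹ * rgen Γ i ^ (D n)) = c := by
    intro n
    have := hB (g₂ * rgen Γ i₂ ^ n) ⟨n, rfl⟩
    rw [setDistN_stdGeod, hyinv n] at this
    exact this
  -- transposition identity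
  have htrans : ∀ t n : ℤ, nlen Γ (rgen Γ i ^ (-t) * w₂ * rgen Γ i₂ ^ n)
      = nlen Γ (rgen Γ i₂ ^ (-n) * w₂⁻¹ * rgen Γ i ^ t) := by
    intro t n
    rw [← nlen_inv]
    congr 1
    group
  have hFK : ∀ t n : ℤ, nlen Γ (rgen Γ i ^ (-t) * w₂ * rgen Γ i₂ ^ n)
      = c + (n - K t).natAbs := by
    intro t n
    rw [kmin_spec Γ (rgen Γ i ^ (-t) * w₂) i₂ n, hKc t]
  have hFD : ∀ t n : ℤ, nlen Γ (rgen Γ i ^ (-t) * w₂ * rgen Γ i₂ ^ n)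
      = c + (t - D n).natAbs := by
    intro t n
    rw [htrans t n, kmin_spec Γ (rgen Γ i₂ ^ (-n) * w₂⁻¹) i t, hDc n]
  -- K is injective
  have hDK : ∀ t, D (K t) = t := by
    intro t
    have h1 := hFK t (K t)
    have h2 := hFD t (K t)
    omega
  have hKinj : Function.Injective K := by
    intro a b hab
    have := hDK a
    rw [hab, hDK b] at this
    exact this.symm
  -- steps of K are ±1
  have hKstep : ∀ t, K (t + 1) = K t + 1 ∨ K (t + 1) = K t - 1 := by
    intro t
    have hpt : nlen Γ (rgen Γ i ^ (-(t+1)) * w₂ * rgen Γ i₂ ^ (K t))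
        ≤ nlen Γ (rgen Γ i ^ (-t) * w₂ * rgen Γ i₂ ^ (K t)) + 1 := by
      have e1 : rgen Γ i ^ (-(t+1)) * w₂ * rgen Γ i₂ ^ (K t)
          = gv Γ ((i, false) : Ltr ι) * (rgen Γ i ^ (-t) * w₂ * rgen Γ i₂ ^ (K t)) := by
        have : gv Γ ((i, false) : Ltr ι) = (rgen Γ i)⁻¹ := rfl
        rw [this]
        have e2 : rgen Γ i ^ (-(t+1)) = (rgen Γ i)⁻¹ * rgen Γ i ^ (-t) := by
          rw [show (-(t+1)) = (-t) + (-1) by ring, zpow_add]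
          group
        rw [e2]
        group
      rw [e1]
      exact nlen_lmul_gv_le Γ _ _
    rw [hFK (t+1) (K t), hFK t (K t)] at hpt
    have hne : K (t+1) ≠ K t := fun h => by
      have := hKinj h
      omega
    omega
  rcases steps_arith K hKinj hKstep with hmono | hmono
  · -- increasing : K t = K 0 + t
    -- first, i₂ = i via the piz bound
    have hpib : ∀ t : ℤ, (piz Γ i (rgen Γ i ^ (-t) * w₂ * rgen Γ i₂ ^ (K t))).natAbs ≤ c := by
      intro t
      have := piz_le_nlen Γ i (rgen Γ i ^ (-t) * w₂ * rgen Γ i₂ ^ (K t))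
      rw [hKc t] at this
      exact this
    have hpiz : ∀ t : ℤ, piz Γ i (rgen Γ i ^ (-t) * w₂ * rgen Γ i₂ ^ (K t))
        = -t + piz Γ i w₂ + (if i₂ = i then K t else 0) := by
      intro t
      rw [piz_mul, piz_mul, piz_rgen_zpow' Γ i i, if_pos rfl, piz_rgen_zpow' Γ i i₂]
    have hii : i₂ = i := by
      by_contra hne
      have h1 := hpib (piz Γ i w₂ + c + 1)
      rw [hpiz, if_neg hne] at h1
      omega
    subst hii
    -- now the pivot argument at t = 0
    have hK1 : K 1 = K 0 + 1 := by rw [hmono 1]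
    set k₀ := K 0 with hk₀
    have f00 : nlen Γ (w₂ * rgen Γ i₂ ^ k₀) = c := by
      have := hKc 0
      rwa [neg_zero, zpow_zero, one_mul] at this
    have f01 : nlen Γ (w₂ * rgen Γ i₂ ^ (k₀ + 1)) = c + 1 := by
      have := hFK 0 (k₀ + 1)
      rw [neg_zero, zpow_zero, one_mul] at this
      rw [this]
      congr 1
      omega
    have f10 : nlen Γ (rgen Γ i₂ ^ (-1 : ℤ) * w₂ * rgen Γ i₂ ^ k₀) = c + 1 := by
      rw [hFK 1 k₀]
      congr 1
      omega
    have f11 : nlen Γ (rgen Γ i₂ ^ (-1 : ℤ) * w₂ * rgen Γ i₂ ^ (k₀ + 1)) = c := by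
      rw [hFK 1 (k₀ + 1)]
      have : (k₀ + 1 - K 1).natAbs = 0 := by omega
      rw [this, add_zero]
    have hgvt : gv Γ ((i₂, true) : Ltr ι) = rgen Γ i₂ := rfl
    have hgvinv : (gv Γ ((i₂, true) : Ltr ι))⁻¹ = rgen Γ i₂ ^ (-1 : ℤ) := by
      rw [hgvt, zpow_neg_one]
    set u₀ := w₂ * rgen Γ i₂ ^ k₀ with hu₀
    have p1 : nlen Γ ((gv Γ ((i₂, true) : Ltr ι))⁻¹ * u₀ * gv Γ ((i₂, true) : Ltr ι))
        = nlen Γ u₀ := by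
      rw [hgvinv, hgvt, hu₀, f00]
      have e : rgen Γ i₂ ^ (-1 : ℤ) * (w₂ * rgen Γ i₂ ^ k₀) * rgen Γ i₂
          = rgen Γ i₂ ^ (-1 : ℤ) * w₂ * rgen Γ i₂ ^ (k₀ + 1) := by
        rw [zpow_add]
        group
      rw [e, f11]
    have p2 : nlen Γ (u₀ * gv Γ ((i₂, true) : Ltr ι)) = nlen Γ u₀ + 1 := by
      rw [hgvt, hu₀, f00]
      have e : w₂ * rgen Γ i₂ ^ k₀ * rgen Γ i₂ = w₂ * rgen Γ i₂ ^ (k₀ + 1) := by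
        rw [zpow_add]
        group
      rw [e, f01]
    have p3 : nlen Γ ((gv Γ ((i₂, true) : Ltr ι))⁻¹ * u₀) = nlen Γ u₀ + 1 := by
      rw [hgvinv, hu₀, f00, ← mul_assoc, f10]
    obtain ⟨-, hlk⟩ := pivot Γ p1 p2 p3
    refine ⟨rfl, u₀, -k₀, hlk, ?_⟩
    rw [hu₀, hw₂]
    rw [mul_assoc, mul_assoc, ← zpow_add]
    simp
  · -- decreasing is impossible
    exfalso
    have hpib : ∀ t : ℤ, (piz Γ i (rgen Γ i ^ (-t) * w₂ * rgen Γ i₂ ^ (K t))).natAbs ≤ c := by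
      intro t
      have := piz_le_nlen Γ i (rgen Γ i ^ (-t) * w₂ * rgen Γ i₂ ^ (K t))
      rw [hKc t] at this
      exact this
    have hpiz : ∀ t : ℤ, piz Γ i (rgen Γ i ^ (-t) * w₂ * rgen Γ i₂ ^ (K t))
        = -t + piz Γ i w₂ + (if i₂ = i then K t else 0) := by
      intro t
      rw [piz_mul, piz_mul, piz_rgen_zpow' Γ i i, if_pos rfl, piz_rgen_zpow' Γ i i₂]
    by_cases hii : i₂ = i
    · have h1 := hpib 0
      have h2 := hpib ((c : ℤ) + 1)
      rw [hpiz, if_pos hii, hmono 0] at h1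
      rw [hpiz, if_pos hii, hmono ((c : ℤ) + 1)] at h2
      omega
    · have h1 := hpib (piz Γ i w₂ + c + 1)
      rw [hpiz, if_neg hii] at h1
      omega


/-! ### constancy of the projection -/

lemma nojump_step (g h : Raag Γ) (i j : ι)
    (hnp : ¬ ParSets (cayley Γ) (stdGeod Γ g i) (stdGeod Γ h j))
    (hna : ¬ ClassAdj Γ (stdGeod Γ g i) (stdGeod Γ h j))
    (p u : Raag Γ) (q : ℤ) (hu : lkWord Γ i u) (hpq : p = g * u * rgen Γ i ^ q)
    (x : Ltr ι) (hx : x.1 = i ∨ Γ.Adj i x.1) :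
    kmin Γ ((p * gv Γ x)⁻¹ * h) j = kmin Γ (p⁻¹ * h) j := by
  by_contra hne
  have hrw : (p * gv Γ x)⁻¹ * h = (gv Γ x)⁻¹ * (p⁻¹ * h) := by group
  rw [hrw] at hne
  obtain ⟨hxj, hlk⟩ := jump Γ hne
  set k := kmin Γ (p⁻¹ * h) j with hkdef
  set u'' := (p⁻¹ * h) * rgen Γ j ^ k with hu''def
  have hu'' : h * rgen Γ j ^ k = p * u'' := by rw [hu''def]; group
  have hlu : stdGeod Γ h j = stdGeod Γ (p * u'') j := by
    rw [← hu'']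
    exact (stdGeod_shift Γ h j k).symm
  rcases hx with hxi | hadj
  · -- the step is in the direction of the geodesic : forces parallelism
    have hij : i = j := by rw [← hxi, hxj]
    refine hnp ?_
    have hlk' : lkWord Γ i u'' := by rw [hij]; exact hlk
    have hpu : p * u'' = g * (u * u'') * rgen Γ i ^ q := by
      rw [hpq, mul_assoc (g * u), (lkWord_commute_zpow Γ hlk' q).eq, ← mul_assoc, mul_assoc g]
    have hps := parsets_coset Γ g (u * u'') (lkWord_mul Γ hu hlk')
    have hstep : stdGeod Γ (g * (u * u'')) i = stdGeod Γ h j := by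
      rw [hlu, hpu, hij, ← hij, stdGeod_shift]
    rw [← hstep]
    exact hps
  · -- the step is across a link letter : forces adjacency of the classes
    have hadj2 : Γ.Adj i j := by rw [← hxj]; exact hadj
    refine hna ⟨stdGeod Γ p i, stdGeod Γ p j, ⟨p, i, rfl⟩, ⟨p, j, rfl⟩, ?_, ?_,
      Or.inl ⟨p, i, j, hadj2, rfl, rfl⟩⟩
    · have hps := parsets_coset Γ g u hu
      rw [hpq, stdGeod_shift]
      exact hps
    · have hps := parsets_symm (parsets_coset Γ p u'' hlk)
      rw [hlu]
      exact hps

lemma proj_const (g h : Raag Γ) (i j : ι)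
    (hnp : ¬ ParSets (cayley Γ) (stdGeod Γ g i) (stdGeod Γ h j))
    (hna : ¬ ClassAdj Γ (stdGeod Γ g i) (stdGeod Γ h j))
    (u : Raag Γ) (hu : lkWord Γ i u) (q : ℤ) :
    kmin Γ ((g * u * rgen Γ i ^ q)⁻¹ * h) j = kmin Γ (g⁻¹ * h) j := by
  have hword : ∀ A : List (Ltr ι), (∀ x ∈ A, Γ.Adj i x.1) →
      kmin Γ ((g * ev Γ A)⁻¹ * h) j = kmin Γ (g⁻¹ * h) j := by
    intro A
    induction A using List.reverseRecOn with
    | nil => intro _; rw [ev_nil, mul_one]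
    | append_singleton A x ih =>
      intro hA
      have hA' : ∀ y ∈ A, Γ.Adj i y.1 := fun y hy => hA y (by simp [hy])
      have hx : Γ.Adj i x.1 := hA x (by simp)
      have e : g * ev Γ (A ++ [x]) = (g * ev Γ A) * gv Γ x := by
        rw [ev_append, ev_singleton, mul_assoc]
      rw [e, nojump_step Γ g h i j hnp hna (g * ev Γ A) (ev Γ A) 0 ⟨A, rfl, hA'⟩
        (by rw [zpow_zero, mul_one]) x (Or.inr hx)]
      exact ih hA'
  obtain ⟨A, hAev, hAadj⟩ := hu
  have base : kmin Γ ((g * u)⁻¹ * h) j = kmin Γ (g⁻¹ * h) j := by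
    rw [← hAev]
    exact hword A hAadj
  have hu' : lkWord Γ i u := ⟨A, hAev, hAadj⟩
  induction q using Int.induction_on with
  | zero => rw [zpow_zero, mul_one]; exact base
  | succ n ihn =>
    have e : g * u * rgen Γ i ^ ((n : ℤ) + 1)
        = (g * u * rgen Γ i ^ (n : ℤ)) * gv Γ ((i, true) : Ltr ι) := by
      have : gv Γ ((i, true) : Ltr ι) = rgen Γ i := rfl
      rw [this, zpow_add_one, ← mul_assoc]
    rw [e, nojump_step Γ g h i j hnp hna (g * u * rgen Γ i ^ (n : ℤ)) u (n : ℤ) hu' rfl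
      ((i, true) : Ltr ι) (Or.inl rfl)]
    exact ihn
  | pred n ihn =>
    have e : g * u * rgen Γ i ^ (-(n : ℤ) - 1)
        = (g * u * rgen Γ i ^ (-(n : ℤ))) * gv Γ ((i, false) : Ltr ι) := by
      have : gv Γ ((i, false) : Ltr ι) = (rgen Γ i)⁻¹ := rfl
      rw [this, zpow_sub_one, ← mul_assoc]
    rw [e, nojump_step Γ g h i j hnp hna (g * u * rgen Γ i ^ (-(n : ℤ))) u (-(n : ℤ)) hu' rfl
      ((i, false) : Ltr ι) (Or.inl rfl)]
    exact ihn

end Stmt11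


end Stmt11Dev

/-- Let `v = Δ(l)` and `u = Δ(l_u)` be non-adjacent (and distinct)
vertices of the extension complex `𝒫(Γ)`, represented by standard geodesics
`l = stdGeod Γ g i` and `l_u = stdGeod Γ h j` of `X(Γ)`.  Then the nearest-point
projection of `l` onto `l_u` is a single vertex `m` of `l_u`, and this vertex is
independent of the choice of representative of `v`: every standard geodesic
parallel to `l` also projects onto `m`. -/
theorem stmt11 {ι : Type} [Finite ι] (Γ : SimpleGraph ι)
    (g h : Raag Γ) (i j : ι)
    (hnp : ¬ ParSets (cayley Γ) (stdGeod Γ g i) (stdGeod Γ h j))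
    (hna : ¬ ClassAdj Γ (stdGeod Γ g i) (stdGeod Γ h j)) :
    ∃ m ∈ stdGeod Γ h j,
      (∀ z ∈ stdGeod Γ g i, NearestPt (cayley Γ) (stdGeod Γ h j) z m) ∧
      (∀ l₂ : Set (Raag Γ), IsStdGeod Γ l₂ → ParSets (cayley Γ) (stdGeod Γ g i) l₂ →
        ∀ z ∈ l₂, NearestPt (cayley Γ) (stdGeod Γ h j) z m) := by
  classical
  refine ⟨h * rgen Γ j ^ (Stmt11.kmin Γ (g⁻¹ * h) j), ⟨_, rfl⟩, ?_, ?_⟩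
  · rintro z ⟨t, rfl⟩
    have hz : Stmt11.kmin Γ ((g * rgen Γ i ^ t)⁻¹ * h) j = Stmt11.kmin Γ (g⁻¹ * h) j := by
      have := Stmt11.proj_const Γ g h i j hnp hna 1 (Stmt11.lkWord_one Γ i) t
      rwa [mul_one] at this
    have := Stmt11.nearest_of_kmin Γ (g * rgen Γ i ^ t) h j
    rwa [hz] at this
  · rintro l₂ ⟨g₂, i₂, rfl⟩ hpar
    obtain ⟨hii, u, q, hu, hg₂⟩ := Stmt11.parallel_classify Γ hpar
    subst hii
    rintro z ⟨s, rfl⟩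
    have hz2 : g₂ * rgen Γ i₂ ^ s = g * u * rgen Γ i₂ ^ (q + s) := by
      rw [hg₂, zpow_add, ← mul_assoc]
    have hzk : Stmt11.kmin Γ ((g₂ * rgen Γ i₂ ^ s)⁻¹ * h) j
        = Stmt11.kmin Γ (g⁻¹ * h) j := by
      rw [hz2]
      exact Stmt11.proj_const Γ g h i₂ j hnp hna u hu (q + s)
    have := Stmt11.nearest_of_kmin Γ (g₂ * rgen Γ i₂ ^ s) h j
    rwa [hzk] at this
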